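/- arXiv:1511.06028 — 12 statements merged into one kernel-verified Lean document; each statement's English description precedes it below -/
import Mathlib

section
/- Let F and G be convex subsets of a vector space with nonempty intersection, K a linear map into a Hilbert space, and L a linear functional. Define the ordered modulus of continuity ω(δ) = sup{Lg − Lf : ‖K(g−f)‖ ≤ δ, f ∈ F, g ∈ G}. Then ω is concave on (0, ∞). -/
def orderedModulusSet {V Y : Type*} [AddCommGroup V] [Module ℝ V]
    [NormedAddCommGroup Y] [InnerProductSpace ℝ Y]
    (K : V →ₗ[ℝ] Y) (L : V →ₗ[ℝ] ℝ) (F G : Set V) (δ : ℝ) : Set ℝ :=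
  {r | ∃ f ∈ F, ∃ g ∈ G, ‖K (g - f)‖ ≤ δ ∧ r = L g - L f}

noncomputable def orderedModulus {V Y : Type*} [AddCommGroup V] [Module ℝ V]
    [NormedAddCommGroup Y] [InnerProductSpace ℝ Y]
    (K : V →ₗ[ℝ] Y) (L : V →ₗ[ℝ] ℝ) (F G : Set V) (δ : ℝ) : ℝ :=
  sSup (orderedModulusSet K L F G δ)

lemma orderedModulusSet_nonempty {V Y : Type*} [AddCommGroup V] [Module ℝ V]
    [NormedAddCommGroup Y] [InnerProductSpace ℝ Y]
    (K : V →ₗ[ℝ] Y) (L : V →ₗ[ℝ] ℝ) {F G : Set V} (hFG : (F ∩ G).Nonempty)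
    {δ : ℝ} (hδ : 0 ≤ δ) : (orderedModulusSet K L F G δ).Nonempty := by
  obtain ⟨x, hxF, hxG⟩ := hFG
  exact ⟨0, x, hxF, x, hxG, by simp [hδ], by simp⟩

lemma orderedModulusSet_comb {V Y : Type*} [AddCommGroup V] [Module ℝ V]
    [NormedAddCommGroup Y] [InnerProductSpace ℝ Y]
    (K : V →ₗ[ℝ] Y) (L : V →ₗ[ℝ] ℝ) {F G : Set V}
    (hF : Convex ℝ F) (hG : Convex ℝ G)
    {δ₁ δ₂ t : ℝ} (ht0 : 0 ≤ t) (ht1 : t ≤ 1)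
    {r₁ r₂ : ℝ} (h₁ : r₁ ∈ orderedModulusSet K L F G δ₁)
    (h₂ : r₂ ∈ orderedModulusSet K L F G δ₂) :
    t * r₁ + (1 - t) * r₂ ∈ orderedModulusSet K L F G (t * δ₁ + (1 - t) * δ₂) := by
  obtain ⟨f₁, hf₁, g₁, hg₁, hn₁, hr₁⟩ := h₁
  obtain ⟨f₂, hf₂, g₂, hg₂, hn₂, hr₂⟩ := h₂
  have ht' : 0 ≤ 1 - t := by linarith
  refine ⟨t • f₁ + (1 - t) • f₂, hF hf₁ hf₂ ht0 ht' (by ring),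
          t • g₁ + (1 - t) • g₂, hG hg₁ hg₂ ht0 ht' (by ring), ?_, ?_⟩
  · have hdiff : (t • g₁ + (1 - t) • g₂) - (t • f₁ + (1 - t) • f₂)
        = t • (g₁ - f₁) + (1 - t) • (g₂ - f₂) := by
      simp [smul_sub]; abel
    rw [hdiff, map_add, map_smul, map_smul]
    calc ‖t • K (g₁ - f₁) + (1 - t) • K (g₂ - f₂)‖
        ≤ ‖t • K (g₁ - f₁)‖ + ‖(1 - t) • K (g₂ - f₂)‖ := norm_add_le _ _
      _ = t * ‖K (g₁ - f₁)‖ + (1 - t) * ‖K (g₂ - f₂)‖ := by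
          rw [norm_smul, norm_smul, Real.norm_of_nonneg ht0, Real.norm_of_nonneg ht']
      _ ≤ t * δ₁ + (1 - t) * δ₂ := by
          gcongr
  · simp only [map_add, map_smul, smul_eq_mul, hr₁, hr₂]
    ring

/-- Concavity of the ordered modulus of continuity. -/
theorem orderedModulus_concave {V Y : Type*} [AddCommGroup V] [Module ℝ V]
    [NormedAddCommGroup Y] [InnerProductSpace ℝ Y]
    (K : V →ₗ[ℝ] Y) (L : V →ₗ[ℝ] ℝ) (F G : Set V)
    (hF : Convex ℝ F) (hG : Convex ℝ G) (hFG : (F ∩ G).Nonempty)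
    (hbdd : ∀ δ > 0, BddAbove (orderedModulusSet K L F G δ))
    (δ₁ δ₂ t : ℝ) (hδ₁ : 0 < δ₁) (hδ₂ : 0 < δ₂) (ht0 : 0 ≤ t) (ht1 : t ≤ 1) :
    t * orderedModulus K L F G δ₁ + (1 - t) * orderedModulus K L F G δ₂ ≤
      orderedModulus K L F G (t * δ₁ + (1 - t) * δ₂) := by
  rcases eq_or_lt_of_le ht0 with h0 | h0
  · simp [← h0]
  rcases eq_or_lt_of_le ht1 with h1 | h1
  · simp [h1]
  have ht' : 0 < 1 - t := by linarith
  set δ := t * δ₁ + (1 - t) * δ₂ with hδdef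
  have hδpos : 0 < δ := by positivity
  have hbS : BddAbove (orderedModulusSet K L F G δ) := hbdd δ hδpos
  have hne₁ := orderedModulusSet_nonempty K L hFG hδ₁.le (F := F) (G := G)
  have hne₂ := orderedModulusSet_nonempty K L hFG hδ₂.le (F := F) (G := G)
  rw [orderedModulus, orderedModulus, orderedModulus]
  have key : ∀ r₁ ∈ orderedModulusSet K L F G δ₁, ∀ r₂ ∈ orderedModulusSet K L F G δ₂,
      t * r₁ + (1 - t) * r₂ ≤ sSup (orderedModulusSet K L F G δ) := fun r₁ h₁ r₂ h₂ =>
    le_csSup hbS (orderedModulusSet_comb K L hF hG ht0 ht1 h₁ h₂)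
  have step1 : ∀ r₂ ∈ orderedModulusSet K L F G δ₂,
      t * sSup (orderedModulusSet K L F G δ₁) + (1 - t) * r₂
        ≤ sSup (orderedModulusSet K L F G δ) := by
    intro r₂ h₂
    have : sSup (orderedModulusSet K L F G δ₁)
        ≤ (sSup (orderedModulusSet K L F G δ) - (1 - t) * r₂) / t := by
      refine csSup_le hne₁ (fun r₁ h₁ => ?_)
      rw [le_div_iff₀ h0]
      nlinarith [key r₁ h₁ r₂ h₂]
    have h := (le_div_iff₀ h0).mp this
    linarith
  have : sSup (orderedModulusSet K L F G δ₂)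
      ≤ (sSup (orderedModulusSet K L F G δ) - t * sSup (orderedModulusSet K L F G δ₁)) / (1 - t) := by
    refine csSup_le hne₂ (fun r₂ h₂ => ?_)
    rw [le_div_iff₀ ht']
    nlinarith [step1 r₂ h₂]
  have h := (le_div_iff₀ ht').mp this
  linarith
end

section
/- Suppose F is centrosymmetric (f ∈ F implies −f ∈ F) and convex, and 0 ∈ F. Then the single-class modulus satisfies ω(δ; F) = sup{2 L f : f ∈ F, ‖K f‖ ≤ δ/2}. -/
/-- For a centrosymmetric convex class, the single-class modulus equals
sup of 2Lf over f ∈ F with ‖Kf‖ ≤ δ/2. -/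
theorem centrosymmetric_modulus {V Y : Type*} [AddCommGroup V] [Module ℝ V]
    [NormedAddCommGroup Y] [InnerProductSpace ℝ Y]
    (K : V →ₗ[ℝ] Y) (L : V →ₗ[ℝ] ℝ) (F : Set V)
    (hF : Convex ℝ F) (hsym : ∀ f ∈ F, -f ∈ F) (h0 : (0 : V) ∈ F)
    (δ : ℝ) (hδ : 0 < δ) :
    orderedModulus K L F F δ =
      sSup {r | ∃ f ∈ F, ‖K f‖ ≤ δ / 2 ∧ r = 2 * L f} := by
  unfold orderedModulus
  congr 1
  ext r
  constructor
  · rintro ⟨f, hf, g, hg, hK, rfl⟩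
    refine ⟨(1/2 : ℝ) • g + (1/2 : ℝ) • (-f),
      hF hg (hsym f hf) (by norm_num) (by norm_num) (by norm_num), ?_, ?_⟩
    · have : K ((1/2 : ℝ) • g + (1/2 : ℝ) • (-f)) = (1/2 : ℝ) • K (g - f) := by
        simp [smul_sub, sub_eq_add_neg]
      rw [this, norm_smul]
      simp only [norm_div, Real.norm_ofNat, norm_one]
      linarith
    · simp [map_smul]
      ring
  · rintro ⟨f, hf, hK, rfl⟩
    refine ⟨-f, hsym f hf, f, hf, ?_, ?_⟩
    · have : f - -f = (2 : ℝ) • f := by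
        rw [sub_neg_eq_add, two_smul]
      rw [this, map_smul, norm_smul]
      simp only [Real.norm_ofNat]
      linarith
    · simp
      ring
end

section
/- Suppose F is convex and centrosymmetric, g ∈ F, and f − g ∈ F for all f ∈ F. Then the ordered modulus between F and the singleton {g} satisfies ω(δ; F, {g}) = ω(δ; {g}, F) = (1/2)·ω(2δ; F). -/
open Pointwise in
/-- Ordered modulus between a centrosymmetric class F and a smooth singleton {g}
equals half the single-class modulus at 2δ. -/
theorem modulus_singleton_centrosymmetric {V Y : Type*} [AddCommGroup V] [Module ℝ V]
    [NormedAddCommGroup Y] [InnerProductSpace ℝ Y]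
    (K : V →ₗ[ℝ] Y) (L : V →ₗ[ℝ] ℝ) (F : Set V)
    (hF : Convex ℝ F) (hsym : ∀ f ∈ F, -f ∈ F)
    (g : V) (hg : g ∈ F) (hshift : ∀ f ∈ F, f - g ∈ F)
    (δ : ℝ) (hδ : 0 < δ) :
    orderedModulus K L F {g} δ = (1 / 2) * orderedModulus K L F F (2 * δ) ∧
    orderedModulus K L ({g} : Set V) F δ = (1 / 2) * orderedModulus K L F F (2 * δ) := by
  -- membership helpers
  have hmid : ∀ a ∈ F, ∀ b ∈ F, (1/2 : ℝ) • (b - a) ∈ F := by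
    intro a ha b hb
    have := hF hb (hsym a ha) (by norm_num : (0:ℝ) ≤ 1/2) (by norm_num : (0:ℝ) ≤ 1/2)
      (by norm_num)
    simpa [smul_sub, sub_eq_add_neg, smul_neg] using this
  have hgsub : ∀ h ∈ F, g - h ∈ F := by
    intro h hh
    have := hsym _ (hshift h hh)
    simpa [neg_sub] using this
  have hgadd : ∀ h ∈ F, g + h ∈ F := by
    intro h hh
    have := hgsub _ (hsym h hh)
    simpa [sub_neg_eq_add] using this
  -- norm helpers
  have hnorm2 : ∀ u : V, ‖K ((g - u) - (u - g))‖ = 2 * ‖K (g - u)‖ := by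
    intro u
    have : (g - u) - (u - g) = (2:ℝ) • (g - u) := by
      rw [two_smul]; abel
    rw [this, map_smul, norm_smul]
    simp
  have hnormhalf : ∀ u : V, ‖K ((1/2 : ℝ) • u)‖ = (1/2) * ‖K u‖ := by
    intro u
    rw [map_smul, norm_smul]
    simp
  have hset1 : orderedModulusSet K L F {g} δ
      = (1/2 : ℝ) • orderedModulusSet K L F F (2 * δ) := by
    ext r
    constructor
    · rintro ⟨f, hf, g', hg', hK, hr⟩
      rw [Set.mem_singleton_iff] at hg'
      rw [hg'] at hK hr
      refine ⟨2 * r, ⟨f - g, hshift f hf, g - f, ?_, ?_, ?_⟩, ?_⟩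
      · have := hsym _ (hshift f hf); simpa [neg_sub] using this
      · rw [hnorm2 f]; linarith
      · simp only [map_sub, hr]; ring
      · simp only [smul_eq_mul]; ring
    · rintro ⟨s, ⟨a, ha, b, hb, hK, hs⟩, hr⟩
      set h : V := (1/2 : ℝ) • (b - a) with hh
      have hhF : h ∈ F := hmid a ha b hb
      refine ⟨g - h, hgsub h hhF, g, rfl, ?_, ?_⟩
      · have : g - (g - h) = h := by abel
        rw [this, hh, hnormhalf]; linarith
      · have hgh : g - (g - h) = h := by abel
        have : L g - L (g - h) = L h := by
          rw [← map_sub, hgh]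
        rw [← hr, this, hh, map_smul, hs]
        simp only [smul_eq_mul, map_sub]
  have hset2 : orderedModulusSet K L ({g} : Set V) F δ
      = (1/2 : ℝ) • orderedModulusSet K L F F (2 * δ) := by
    ext r
    constructor
    · rintro ⟨f, hf, g', hg', hK, hr⟩
      rw [Set.mem_singleton_iff] at hf
      rw [hf] at hK hr
      refine ⟨2 * r, ⟨g - g', ?_, g' - g, hshift g' hg', ?_, ?_⟩, ?_⟩
      · have := hsym _ (hshift g' hg'); simpa [neg_sub] using this
      · have : (g' - g) - (g - g') = (2:ℝ) • (g' - g) := by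
          rw [two_smul]; abel
        rw [this, map_smul, norm_smul]
        simp only [Real.norm_ofNat]
        linarith
      · simp only [map_sub, hr]; ring
      · simp only [smul_eq_mul]; ring
    · rintro ⟨s, ⟨a, ha, b, hb, hK, hs⟩, hr⟩
      set h : V := (1/2 : ℝ) • (b - a) with hh
      have hhF : h ∈ F := hmid a ha b hb
      refine ⟨g, rfl, g + h, hgadd h hhF, ?_, ?_⟩
      · have : g + h - g = h := by abel
        rw [this, hh, hnormhalf]; linarith
      · have hgh : g + h - g = h := by abel
        have : L (g + h) - L g = L h := by
          rw [← map_sub, hgh]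
        rw [← hr, this, hh, map_smul, hs]
        simp only [smul_eq_mul, map_sub]
  constructor
  · rw [orderedModulus, orderedModulus, hset1,
      Real.sSup_smul_of_nonneg (by norm_num : (0:ℝ) ≤ 1/2), smul_eq_mul]
  · rw [orderedModulus, orderedModulus, hset2,
      Real.sSup_smul_of_nonneg (by norm_num : (0:ℝ) ≤ 1/2), smul_eq_mul]
end

section
/- Let F and G be convex, let f*, g* solve the ordered modulus problem at δ₀ with ‖K(f*−g*)‖ = δ₀ > 0, and let d be a supergradient of ω(·; F, G) at δ₀. Then for all g ∈ G: Lg − Lg* ≤ d·⟨K(g*−f*), K(g−g*)⟩/‖K(g*−f*)‖, and for all f ∈ F: Lf − Lf* ≥ d·⟨K(g*−f*), K(f−f*)⟩/‖K(g*−f*)‖. -/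
private lemma core_bias {Y : Type*} [NormedAddCommGroup Y] [InnerProductSpace ℝ Y]
    (a b : Y) (d s δ₀ : ℝ) (h0 : 0 < δ₀) (hδ : ‖a‖ = δ₀)
    (H : ∀ t : ℝ, 0 < t → t ≤ 1 → 0 < ‖a + t • b‖ → t * s ≤ d * (‖a + t • b‖ - δ₀)) :
    s ≤ d * (inner ℝ a b : ℝ) / δ₀ := by
  set c : ℝ := (inner ℝ a b : ℝ) with hc
  have hb1 : (0:ℝ) < ‖b‖ + 1 := by positivity
  have hnormlb : ∀ t : ℝ, 0 < t → t ≤ δ₀ / (2 * (‖b‖ + 1)) → δ₀ / 2 ≤ ‖a + t • b‖ := by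
    intro t ht htb
    have hsm : ‖t • b‖ ≤ δ₀ / 2 := by
      rw [norm_smul, Real.norm_eq_abs, abs_of_pos ht]
      have h1 : t * ‖b‖ ≤ t * (‖b‖ + 1) := by nlinarith [norm_nonneg b]
      have h2 : t * (‖b‖ + 1) ≤ (δ₀ / (2 * (‖b‖ + 1))) * (‖b‖ + 1) :=
        mul_le_mul_of_nonneg_right htb (by positivity)
      have h3 : (δ₀ / (2 * (‖b‖ + 1))) * (‖b‖ + 1) = δ₀ / 2 := by field_simp
      linarith
    have h4 : ‖a‖ ≤ ‖a + t • b‖ + ‖t • b‖ := by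
      calc ‖a‖ = ‖(a + t • b) - t • b‖ := by rw [add_sub_cancel_right]
        _ ≤ ‖a + t • b‖ + ‖t • b‖ := norm_sub_le _ _
    rw [hδ] at h4
    linarith
  have hCS : ∀ t : ℝ, δ₀ + t * c / δ₀ ≤ ‖a + t • b‖ := by
    intro t
    have h1 := real_inner_le_norm a (a + t • b)
    have h2 : (inner ℝ a (a + t • b) : ℝ) = δ₀ ^ 2 + t * c := by
      rw [inner_add_right, real_inner_smul_right, real_inner_self_eq_norm_sq, hδ]
    rw [h2, hδ] at h1
    rw [show δ₀ + t * c / δ₀ = (δ₀ ^ 2 + t * c) / δ₀ by field_simp,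
      div_le_iff₀ h0]
    linarith [mul_comm δ₀ ‖a + t • b‖ ▸ h1]
  have hub : ∀ t : ℝ, ‖a + t • b‖ ≤ δ₀ + t * c / δ₀ + t ^ 2 * ‖b‖ ^ 2 / (2 * δ₀) := by
    intro t
    have hsq : ‖a + t • b‖ ^ 2 = δ₀ ^ 2 + 2 * (t * c) + t ^ 2 * ‖b‖ ^ 2 := by
      rw [norm_add_sq_real, real_inner_smul_right, norm_smul, Real.norm_eq_abs, hδ,
        mul_pow, sq_abs]
    rw [show δ₀ + t * c / δ₀ + t ^ 2 * ‖b‖ ^ 2 / (2 * δ₀)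
        = (2 * δ₀ ^ 2 + 2 * (t * c) + t ^ 2 * ‖b‖ ^ 2) / (2 * δ₀) by field_simp,
      le_div_iff₀ (by positivity)]
    nlinarith [sq_nonneg (‖a + t • b‖ - δ₀)]
  rcases le_or_gt 0 d with hd | hd
  · apply le_of_forall_pos_le_add
    intro ε hε
    set C : ℝ := d * ‖b‖ ^ 2 / (2 * δ₀) with hC
    have hC0 : 0 ≤ C := by positivity
    set t : ℝ := min (min 1 (δ₀ / (2 * (‖b‖ + 1)))) (ε / (C + 1)) with htdef
    have ht0 : 0 < t := by
      apply lt_min (lt_min one_pos (by positivity)) (by positivity)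
    have ht1 : t ≤ 1 := le_trans (min_le_left _ _) (min_le_left _ _)
    have htb : t ≤ δ₀ / (2 * (‖b‖ + 1)) := le_trans (min_le_left _ _) (min_le_right _ _)
    have hte : t ≤ ε / (C + 1) := min_le_right _ _
    have hpos : 0 < ‖a + t • b‖ := lt_of_lt_of_le (half_pos h0) (hnormlb t ht0 htb)
    have h := H t ht0 ht1 hpos
    have h3 : d * (‖a + t • b‖ - δ₀) ≤ d * (t * c / δ₀ + t ^ 2 * ‖b‖ ^ 2 / (2 * δ₀)) :=
      mul_le_mul_of_nonneg_left (by linarith [hub t]) hd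
    have h4 : t * s ≤ t * (d * c / δ₀ + t * C) := by
      calc t * s ≤ d * (‖a + t • b‖ - δ₀) := h
        _ ≤ d * (t * c / δ₀ + t ^ 2 * ‖b‖ ^ 2 / (2 * δ₀)) := h3
        _ = t * (d * c / δ₀ + t * C) := by rw [hC]; ring
    have h5 : s ≤ d * c / δ₀ + t * C := le_of_mul_le_mul_left h4 ht0
    have h6 : t * C ≤ ε := by
      calc t * C ≤ (ε / (C + 1)) * C := mul_le_mul_of_nonneg_right hte hC0
        _ ≤ ε := by rw [div_mul_eq_mul_div, div_le_iff₀ (by positivity)]; nlinarith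
    linarith
  · set t : ℝ := min 1 (δ₀ / (2 * (‖b‖ + 1))) with htdef
    have ht0 : 0 < t := lt_min one_pos (by positivity)
    have ht1 : t ≤ 1 := min_le_left _ _
    have htb : t ≤ δ₀ / (2 * (‖b‖ + 1)) := min_le_right _ _
    have hpos : 0 < ‖a + t • b‖ := lt_of_lt_of_le (half_pos h0) (hnormlb t ht0 htb)
    have h := H t ht0 ht1 hpos
    have h3 : d * (‖a + t • b‖ - δ₀) ≤ d * (t * c / δ₀) :=
      mul_le_mul_of_nonpos_left (by linarith [hCS t]) (le_of_lt hd)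
    have h4 : t * s ≤ t * (d * c / δ₀) := by
      calc t * s ≤ d * (‖a + t • b‖ - δ₀) := h
        _ ≤ d * (t * c / δ₀) := h3
        _ = t * (d * c / δ₀) := by ring
    exact le_of_mul_le_mul_left h4 ht0

/-- Bias inequalities for the solutions of the ordered modulus problem. -/
theorem ordered_modulus_bias_inequalities {V Y : Type*} [AddCommGroup V] [Module ℝ V]
    [NormedAddCommGroup Y] [InnerProductSpace ℝ Y]
    (K : V →ₗ[ℝ] Y) (L : V →ₗ[ℝ] ℝ) (F G : Set V)
    (hF : Convex ℝ F) (hG : Convex ℝ G) (hFG : (F ∩ G).Nonempty)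
    (hbdd : ∀ δ > 0, BddAbove (orderedModulusSet K L F G δ))
    (δ₀ : ℝ) (hδ₀ : 0 < δ₀) (fStar gStar : V)
    (hfF : fStar ∈ F) (hgG : gStar ∈ G)
    (hnorm : ‖K (gStar - fStar)‖ = δ₀)
    (hattain : L gStar - L fStar = orderedModulus K L F G δ₀)
    (d : ℝ)
    (hd : ∀ η > 0, orderedModulus K L F G η ≤ orderedModulus K L F G δ₀ + d * (η - δ₀)) :
    (∀ g ∈ G, L g - L gStar ≤
        d * (inner ℝ (K (gStar - fStar)) (K (g - gStar)) : ℝ) / ‖K (gStar - fStar)‖) ∧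
    (∀ f ∈ F, d * (inner ℝ (K (gStar - fStar)) (K (f - fStar)) : ℝ) / ‖K (gStar - fStar)‖ ≤
        L f - L fStar) := by
  have key : ∀ f ∈ F, ∀ g ∈ G, 0 < ‖K (g - f)‖ →
      L g - L f ≤ (L gStar - L fStar) + d * (‖K (g - f)‖ - δ₀) := by
    intro f hf g hg hpos
    have hmem : L g - L f ∈ orderedModulusSet K L F G ‖K (g - f)‖ :=
      ⟨f, hf, g, hg, le_refl _, rfl⟩
    have h1 : L g - L f ≤ orderedModulus K L F G ‖K (g - f)‖ :=
      le_csSup (hbdd _ hpos) hmem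
    have h2 := hd _ hpos
    rw [hattain]
    linarith
  constructor
  · intro g hg
    have H : ∀ t : ℝ, 0 < t → t ≤ 1 → 0 < ‖K (gStar - fStar) + t • K (g - gStar)‖ →
        t * (L g - L gStar) ≤ d * (‖K (gStar - fStar) + t • K (g - gStar)‖ - δ₀) := by
      intro t ht0 ht1 hpos
      set gt := gStar + t • (g - gStar) with hgt
      have hgtG : gt ∈ G := by
        have := hG hgG hg (by linarith : (0:ℝ) ≤ 1 - t) (le_of_lt ht0) (by ring)
        have heq : (1 - t) • gStar + t • g = gt := by rw [hgt]; module
        rwa [heq] at this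
      have hKeq : K (gt - fStar) = K (gStar - fStar) + t • K (g - gStar) := by
        have : gt - fStar = (gStar - fStar) + t • (g - gStar) := by rw [hgt]; module
        rw [this, map_add, map_smul]
      have hLeq : L gt = L gStar + t * (L g - L gStar) := by
        rw [hgt, map_add, map_smul, smul_eq_mul, map_sub]
      have := key fStar hfF gt hgtG (by rw [hKeq]; exact hpos)
      rw [hKeq, hLeq] at this
      linarith
    have := core_bias (K (gStar - fStar)) (K (g - gStar)) d (L g - L gStar) δ₀ hδ₀ hnorm H
    rwa [← hnorm] at this
  · intro f hf
    have H : ∀ t : ℝ, 0 < t → t ≤ 1 → 0 < ‖K (gStar - fStar) + t • K (fStar - f)‖ →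
        t * (L fStar - L f) ≤ d * (‖K (gStar - fStar) + t • K (fStar - f)‖ - δ₀) := by
      intro t ht0 ht1 hpos
      set ft := fStar + t • (f - fStar) with hft
      have hftF : ft ∈ F := by
        have := hF hfF hf (by linarith : (0:ℝ) ≤ 1 - t) (le_of_lt ht0) (by ring)
        have heq : (1 - t) • fStar + t • f = ft := by rw [hft]; module
        rwa [heq] at this
      have hKeq : K (gStar - ft) = K (gStar - fStar) + t • K (fStar - f) := by
        have : gStar - ft = (gStar - fStar) + t • (fStar - f) := by rw [hft]; module
        rw [this, map_add, map_smul]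
      have hLeq : L ft = L fStar + t * (L f - L fStar) := by
        rw [hft, map_add, map_smul, smul_eq_mul, map_sub]
      have := key ft hftF gStar hgG (by rw [hKeq]; exact hpos)
      rw [hKeq, hLeq] at this
      linarith
    have hcore := core_bias (K (gStar - fStar)) (K (fStar - f)) d (L fStar - L f) δ₀ hδ₀ hnorm H
    have hinner : (inner ℝ (K (gStar - fStar)) (K (fStar - f)) : ℝ)
        = -(inner ℝ (K (gStar - fStar)) (K (f - fStar)) : ℝ) := by
      have : K (fStar - f) = -(K (f - fStar)) := by rw [← map_neg]; congr 1; abel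
      rw [this, inner_neg_right]
    rw [hinner] at hcore
    rw [hnorm]
    have : d * -(inner ℝ (K (gStar - fStar)) (K (f - fStar)) : ℝ) / δ₀
        = -(d * (inner ℝ (K (gStar - fStar)) (K (f - fStar)) : ℝ) / δ₀) := by ring
    rw [this] at hcore
    linarith
end

section
/- Under the conditions of the bias inequality lemma (f*, g* attain the ordered modulus at δ with ‖K(g*−f*)‖ = δ, d a supergradient), the affine estimator L̂ = L((f*+g*)/2) + (d/δ)⟨K(g*−f*), Y − K(f*+g*)/2⟩ applied to Y = Kf has maximum bias over F attained at f* and minimum bias over G attained at g*; moreover the maximum bias over F equals (ω(δ) − δd)/2 and the minimum bias over G equals −(ω(δ) − δd)/2. -/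
open RealInnerProductSpace


lemma aux_limit (A c : ℝ) (hc : 0 ≤ c) (h : ∀ t : ℝ, 0 < t → t ≤ 1 → A ≤ t * c) : A ≤ 0 := by
  by_contra hA
  push_neg at hA
  have hc1 : 0 < c + 1 := by linarith
  set t := min 1 (A / (2 * (c + 1))) with ht
  have ht0 : 0 < t := lt_min one_pos (by positivity)
  have h1 := h t ht0 (min_le_left _ _)
  have h2 : t * c ≤ (A / (2 * (c + 1))) * c :=
    mul_le_mul_of_nonneg_right (min_le_right _ _) hc
  have h3 : (A / (2 * (c + 1))) * c < A := by
    rw [div_mul_eq_mul_div, div_lt_iff₀ (by linarith)]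
    nlinarith
  linarith

lemma aux_norm {Y : Type*} [NormedAddCommGroup Y] [InnerProductSpace ℝ Y]
    (u v : Y) (δ : ℝ) (hδ : 0 < δ) (hu : ‖u‖ = δ) :
    ‖u + v‖ ≤ δ + (2 * ⟪u, v⟫ + ‖v‖ ^ 2) / (2 * δ) ∧
    0 < δ + (2 * ⟪u, v⟫ + ‖v‖ ^ 2) / (2 * δ) := by
  set b : ℝ := 2 * ⟪u, v⟫ + ‖v‖ ^ 2 with hb
  have h1 : ‖u + v‖ ^ 2 = δ ^ 2 + b := by
    rw [norm_add_sq_real, hu]; ring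
  have hb2 : -δ ^ 2 ≤ b := by nlinarith [sq_nonneg ‖u + v‖]
  have hr : δ / 2 ≤ δ + b / (2 * δ) := by
    have h' : (-δ ^ 2) / (2 * δ) ≤ b / (2 * δ) := by gcongr
    have h'' : (-δ ^ 2) / (2 * δ) = -(δ / 2) := by field_simp
    linarith
  constructor
  · have h2 : ‖u + v‖ ^ 2 ≤ (δ + b / (2 * δ)) ^ 2 := by
      rw [h1]
      have : (δ + b / (2 * δ)) ^ 2 = δ ^ 2 + b + (b / (2 * δ)) ^ 2 := by
        field_simp; ring
      nlinarith [sq_nonneg (b / (2 * δ))]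
    calc ‖u + v‖ = Real.sqrt (‖u + v‖ ^ 2) := (Real.sqrt_sq (norm_nonneg _)).symm
      _ ≤ Real.sqrt ((δ + b / (2 * δ)) ^ 2) := Real.sqrt_le_sqrt h2
      _ = δ + b / (2 * δ) := Real.sqrt_sq (by linarith)
  · linarith


/-- The affine estimator built from the modulus solutions has maximum bias over F
at f*, minimum bias over G at g*, and worst-case biases ±(ω(δ)−δd)/2. -/
theorem affine_estimator_bias {V Y : Type*} [AddCommGroup V] [Module ℝ V]
    [NormedAddCommGroup Y] [InnerProductSpace ℝ Y]
    (K : V →ₗ[ℝ] Y) (L : V →ₗ[ℝ] ℝ) (F G : Set V)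
    (hF : Convex ℝ F) (hG : Convex ℝ G) (hFG : (F ∩ G).Nonempty)
    (hbdd : ∀ δ > 0, BddAbove (orderedModulusSet K L F G δ))
    (δ : ℝ) (hδ : 0 < δ) (fStar gStar : V)
    (hfF : fStar ∈ F) (hgG : gStar ∈ G)
    (hnorm : ‖K (gStar - fStar)‖ = δ)
    (hattain : L gStar - L fStar = orderedModulus K L F G δ)
    (d : ℝ)
    (hd : ∀ η > 0, orderedModulus K L F G η ≤ orderedModulus K L F G δ + d * (η - δ))
    (bias : V → ℝ)
    (hbias : ∀ f, bias f = L (((1:ℝ)/2) • (fStar + gStar)) +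
      (d / δ) * (inner ℝ (K (gStar - fStar))
        (K f - K (((1:ℝ)/2) • (fStar + gStar))) : ℝ) - L f) :
    (∀ f ∈ F, bias f ≤ bias fStar) ∧
    (∀ g ∈ G, bias gStar ≤ bias g) ∧
    bias fStar = (orderedModulus K L F G δ - δ * d) / 2 ∧
    bias gStar = -((orderedModulus K L F G δ - δ * d) / 2) := by
  have hδ' : δ ≠ 0 := ne_of_gt hδ
  set u : Y := K (gStar - fStar) with hu
  have hu' : u = K gStar - K fStar := map_sub K _ _
  -- pair bound
  have pair_bound : ∀ f' ∈ F, ∀ g' ∈ G, ∀ η : ℝ, 0 < η → ‖K (g' - f')‖ ≤ η →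
      L g' - L f' ≤ orderedModulus K L F G δ + d * (η - δ) := by
    intro f' hf' g' hg' η hη hn
    exact (le_csSup (hbdd η hη) ⟨f', hf', g', hg', hn, rfl⟩).trans (hd η hη)
  have hd0 : 0 ≤ d := by
    have h := pair_bound fStar hfF gStar hgG (δ + 1) (by linarith)
      (by rw [hnorm]; linarith)
    rw [← hattain] at h
    linarith
  -- key inequality on F side
  have keyF : ∀ f ∈ F, (d / δ) * ⟪u, K f - K fStar⟫ ≤ L f - L fStar := by
    intro f hf
    set w : Y := K f - K fStar with hw
    have hA : (d / δ) * ⟪u, w⟫ - (L f - L fStar) ≤ 0 := by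
      apply aux_limit _ (d * ‖w‖ ^ 2 / (2 * δ)) (by positivity)
      intro t ht0 ht1
      set ft : V := (1 - t) • fStar + t • f with hft
      have hftF : ft ∈ F := hF hfF hf (by linarith) (le_of_lt ht0) (by ring)
      have hKv : K (gStar - ft) = u + (-t) • w := by
        simp only [hft, hw, hu, map_sub, map_add, map_smul]
        module
      obtain ⟨hle, hpos⟩ := aux_norm u ((-t) • w) δ hδ hnorm
      have hpb := pair_bound ft hftF gStar hgG _ hpos (by rw [hKv]; exact hle)
      rw [← hattain] at hpb
      have hLft : L ft = (1 - t) * L fStar + t * L f := by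
        simp [hft, map_add, map_smul, smul_eq_mul]
      have hi : ⟪u, (-t) • w⟫ = -t * ⟪u, w⟫ := by
        rw [real_inner_smul_right]
      have hnw : ‖(-t) • w‖ ^ 2 = t ^ 2 * ‖w‖ ^ 2 := by
        rw [norm_smul, Real.norm_eq_abs, abs_neg, abs_of_pos ht0]; ring
      rw [hLft, hi, hnw] at hpb
      have hkey : d * (δ + (2 * (-t * ⟪u, w⟫) + t ^ 2 * ‖w‖ ^ 2) / (2 * δ) - δ) =
          t * (-((d / δ) * ⟪u, w⟫) + t * (d * ‖w‖ ^ 2 / (2 * δ))) := by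
        field_simp; ring
      rw [hkey] at hpb
      have h6 : -(L f - L fStar) ≤ -((d / δ) * ⟪u, w⟫) + t * (d * ‖w‖ ^ 2 / (2 * δ)) := by
        have h5 : t * (-(L f - L fStar)) ≤
            t * (-((d / δ) * ⟪u, w⟫) + t * (d * ‖w‖ ^ 2 / (2 * δ))) := by linarith
        exact le_of_mul_le_mul_left h5 ht0
      linarith
    linarith
  -- key inequality on G side
  have keyG : ∀ g ∈ G, L g - L gStar ≤ (d / δ) * ⟪u, K g - K gStar⟫ := by
    intro g hg
    set w : Y := K g - K gStar with hw
    have hA : (L g - L gStar) - (d / δ) * ⟪u, w⟫ ≤ 0 := by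
      apply aux_limit _ (d * ‖w‖ ^ 2 / (2 * δ)) (by positivity)
      intro t ht0 ht1
      set gt : V := (1 - t) • gStar + t • g with hgt
      have hgtG : gt ∈ G := hG hgG hg (by linarith) (le_of_lt ht0) (by ring)
      have hKv : K (gt - fStar) = u + t • w := by
        simp only [hgt, hw, hu, map_sub, map_add, map_smul]
        module
      obtain ⟨hle, hpos⟩ := aux_norm u (t • w) δ hδ hnorm
      have hpb := pair_bound fStar hfF gt hgtG _ hpos (by rw [hKv]; exact hle)
      rw [← hattain] at hpb
      have hLgt : L gt = (1 - t) * L gStar + t * L g := by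
        simp [hgt, map_add, map_smul, smul_eq_mul]
      have hi : ⟪u, t • w⟫ = t * ⟪u, w⟫ := by
        rw [real_inner_smul_right]
      have hnw : ‖t • w‖ ^ 2 = t ^ 2 * ‖w‖ ^ 2 := by
        rw [norm_smul, Real.norm_eq_abs, abs_of_pos ht0]; ring
      rw [hLgt, hi, hnw] at hpb
      have hkey : d * (δ + (2 * (t * ⟪u, w⟫) + t ^ 2 * ‖w‖ ^ 2) / (2 * δ) - δ) =
          t * ((d / δ) * ⟪u, w⟫ + t * (d * ‖w‖ ^ 2 / (2 * δ))) := by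
        field_simp; ring
      rw [hkey] at hpb
      have h6 : (L g - L gStar) ≤ (d / δ) * ⟪u, w⟫ + t * (d * ‖w‖ ^ 2 / (2 * δ)) := by
        have h5 : t * (L g - L gStar) ≤
            t * ((d / δ) * ⟪u, w⟫ + t * (d * ‖w‖ ^ 2 / (2 * δ))) := by linarith
        exact le_of_mul_le_mul_left h5 ht0
      linarith
    linarith
  -- value computations
  set m : V := ((1:ℝ)/2) • (fStar + gStar) with hm
  have hLm : L m = (L fStar + L gStar) / 2 := by
    simp [hm, map_add, map_smul, smul_eq_mul]; ring
  have hKfm : K fStar - K m = (-(1/2 : ℝ)) • u := by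
    simp only [hm, hu, map_sub, map_add, map_smul]
    module
  have hKgm : K gStar - K m = ((1/2 : ℝ)) • u := by
    simp only [hm, hu, map_sub, map_add, map_smul]
    module
  have huu : ⟪u, u⟫ = δ ^ 2 := by
    rw [real_inner_self_eq_norm_sq, hnorm]
  have hbf : bias fStar = (orderedModulus K L F G δ - δ * d) / 2 := by
    rw [hbias fStar, ← hattain]
    rw [show K fStar - K m = (-(1/2 : ℝ)) • u from hKfm, real_inner_smul_right, huu, hLm]
    field_simp
    ring
  have hbg : bias gStar = -((orderedModulus K L F G δ - δ * d) / 2) := by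
    rw [hbias gStar, ← hattain]
    rw [show K gStar - K m = ((1/2 : ℝ)) • u from hKgm, real_inner_smul_right, huu, hLm]
    field_simp
    ring
  refine ⟨?_, ?_, hbf, hbg⟩
  · intro f hf
    rw [hbias f, hbias fStar]
    have hsub : ⟪u, K f - K m⟫ - ⟪u, K fStar - K m⟫ = ⟪u, K f - K fStar⟫ := by
      rw [← inner_sub_right, sub_sub_sub_cancel_right]
    have h2 : (d / δ) * ⟪u, K f - K m⟫ - (d / δ) * ⟪u, K fStar - K m⟫ =
        (d / δ) * ⟪u, K f - K fStar⟫ := by rw [← mul_sub, hsub]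
    have := keyF f hf
    linarith
  · intro g hg
    rw [hbias g, hbias gStar]
    have hsub : ⟪u, K g - K m⟫ - ⟪u, K gStar - K m⟫ = ⟪u, K g - K gStar⟫ := by
      rw [← inner_sub_right, sub_sub_sub_cancel_right]
    have h2 : (d / δ) * ⟪u, K g - K m⟫ - (d / δ) * ⟪u, K gStar - K m⟫ =
        (d / δ) * ⟪u, K g - K gStar⟫ := by rw [← mul_sub, hsub]
    have := keyG g hg
    linarith
end

section
/- Let f* and g* attain the ordered modulus ω(δ₀; F, G) with δ₀ = ‖K(g*−f*)‖ > 0, and suppose there is ι ∈ V with Lι = 1 such that f* + cι ∈ F for all c in a neighborhood of 0. Then ω(·; F, G) is differentiable at δ₀ with derivative ω'(δ₀) = δ₀ / ⟨Kι, K(g* − f*)⟩. -/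
/-- Under translation invariance at f*, the ordered modulus is differentiable at δ₀
with derivative δ₀ / ⟨Kι, K(g*−f*)⟩: every supergradient equals this value. -/
theorem translation_invariant_derivative {V Y : Type*} [AddCommGroup V] [Module ℝ V]
    [NormedAddCommGroup Y] [InnerProductSpace ℝ Y]
    (K : V →ₗ[ℝ] Y) (L : V →ₗ[ℝ] ℝ) (F G : Set V)
    (hF : Convex ℝ F) (hG : Convex ℝ G) (hFG : (F ∩ G).Nonempty)
    (hbdd : ∀ δ > 0, BddAbove (orderedModulusSet K L F G δ))
    (δ₀ : ℝ) (hδ₀ : 0 < δ₀) (fStar gStar : V)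
    (hfF : fStar ∈ F) (hgG : gStar ∈ G)
    (hnorm : ‖K (gStar - fStar)‖ = δ₀)
    (hattain : L gStar - L fStar = orderedModulus K L F G δ₀)
    (ι : V) (hι : L ι = 1)
    (htrans : ∃ η > 0, ∀ c : ℝ, |c| ≤ η → fStar + c • ι ∈ F) :
    ∀ d : ℝ,
      (∀ η > 0, orderedModulus K L F G η ≤ orderedModulus K L F G δ₀ + d * (η - δ₀)) →
      d = δ₀ / (inner ℝ (K ι) (K (gStar - fStar)) : ℝ) := by
  intro d hd
  obtain ⟨η, hηpos, htr⟩ := htrans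
  set u : Y := K (gStar - fStar) with hu
  set v : Y := K ι with hv
  set a : ℝ := inner ℝ v u with ha
  set b : ℝ := ‖v‖ ^ 2 with hb
  have hbnn : 0 ≤ b := sq_nonneg _
  set η' : ℝ := min η (δ₀ / (2 * (‖v‖ + 1))) with hη'
  have hvpos : (0:ℝ) < ‖v‖ + 1 := by positivity
  have hη'pos : 0 < η' := lt_min hηpos (by positivity)
  have hη'v : η' * ‖v‖ ≤ δ₀ / 2 := by
    have h1 : η' ≤ δ₀ / (2 * (‖v‖ + 1)) := min_le_right _ _
    have h2 : η' * ‖v‖ ≤ (δ₀ / (2 * (‖v‖ + 1))) * ‖v‖ :=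
      mul_le_mul_of_nonneg_right h1 (norm_nonneg _)
    have h3 : (δ₀ / (2 * (‖v‖ + 1))) * ‖v‖ ≤ δ₀ / 2 := by
      rw [div_mul_eq_mul_div, div_le_div_iff₀ (by positivity) (by norm_num)]
      nlinarith [norm_nonneg v]
    linarith
  have key : ∀ t : ℝ, |t| ≤ η' → -t ≤ d * (‖u - t • v‖ - δ₀) := by
    intro t ht
    have htη : |t| ≤ η := le_trans ht (min_le_left _ _)
    have hFmem : fStar + t • ι ∈ F := htr t htη
    have hlow : δ₀ - |t| * ‖v‖ ≤ ‖u - t • v‖ := by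
      have := norm_sub_norm_le u (t • v)
      rw [norm_smul, Real.norm_eq_abs] at this
      linarith [hnorm]
    have htv : |t| * ‖v‖ ≤ δ₀ / 2 := by
      have : |t| * ‖v‖ ≤ η' * ‖v‖ := mul_le_mul_of_nonneg_right ht (norm_nonneg _)
      linarith
    have hδt : (0:ℝ) < ‖u - t • v‖ := by linarith
    have hmem : L gStar - L (fStar + t • ι) ∈ orderedModulusSet K L F G ‖u - t • v‖ := by
      refine ⟨fStar + t • ι, hFmem, gStar, hgG, le_of_eq ?_, rfl⟩
      congr 1
      have : gStar - (fStar + t • ι) = (gStar - fStar) - t • ι := by abel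
      rw [this, map_sub, map_smul]
    have h1 : L gStar - L (fStar + t • ι) ≤ orderedModulus K L F G ‖u - t • v‖ :=
      le_csSup (hbdd _ hδt) hmem
    have h2 := hd _ hδt
    have hL : L (fStar + t • ι) = L fStar + t := by
      rw [map_add, map_smul, hι]; simp
    rw [hL] at h1
    linarith
  have hsq : ∀ t : ℝ, ‖u - t • v‖ ^ 2 = δ₀ ^ 2 - 2 * t * a + t ^ 2 * b := by
    intro t
    have hcom : (inner ℝ u v : ℝ) = a := (real_inner_comm u v).symm.trans ha.symm
    rw [norm_sub_sq_real, real_inner_smul_right, norm_smul, Real.norm_eq_abs,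
      mul_pow, sq_abs, hnorm, hcom, hb]
    ring
  set C : ℝ := ‖v‖ + |d| * b with hC
  have hCnn : 0 ≤ C := by positivity
  have main : ∀ t : ℝ, 0 < t → t ≤ η' → |2 * d * a - 2 * δ₀| ≤ t * C := by
    intro t htpos htle
    have habs : |t| = t := abs_of_pos htpos
    -- positive direction
    have k1 := key t (by rw [habs]; exact htle)
    have k2 := key (-t) (by rw [abs_neg, habs]; exact htle)
    set N₁ : ℝ := ‖u - t • v‖ with hN₁
    set N₂ : ℝ := ‖u - (-t) • v‖ with hN₂
    have hN₁sq : N₁ ^ 2 = δ₀ ^ 2 - 2 * t * a + t ^ 2 * b := hsq t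
    have hN₂sq : N₂ ^ 2 = δ₀ ^ 2 + 2 * t * a + t ^ 2 * b := by
      rw [hN₂, hsq (-t)]; ring
    have hN₁nn : 0 ≤ N₁ := norm_nonneg _
    have hN₂nn : 0 ≤ N₂ := norm_nonneg _
    have hN₁ub : N₁ ≤ δ₀ + t * ‖v‖ := by
      have := norm_sub_le u (t • v)
      rw [norm_smul, Real.norm_eq_abs, habs] at this
      linarith [hnorm]
    have hN₂lb : δ₀ - t * ‖v‖ ≤ N₂ := by
      have := norm_sub_norm_le u ((-t) • v)
      rw [norm_smul, Real.norm_eq_abs, abs_neg, habs] at this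
      linarith [hnorm]
    -- from k1: -t ≤ d * (N₁ - δ₀); multiply by (N₁ + δ₀) > 0
    have hS₁pos : 0 < N₁ + δ₀ := by linarith
    have hS₂pos : 0 < N₂ + δ₀ := by linarith
    have e1 : -t * (N₁ + δ₀) ≤ d * (N₁ - δ₀) * (N₁ + δ₀) :=
      mul_le_mul_of_nonneg_right k1 (le_of_lt hS₁pos)
    have e2 : -(-t) * (N₂ + δ₀) ≤ d * (N₂ - δ₀) * (N₂ + δ₀) :=
      mul_le_mul_of_nonneg_right k2 (le_of_lt hS₂pos)
    have f1 : -t * (N₁ + δ₀) ≤ d * (-2 * t * a + t ^ 2 * b) := by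
      have : d * (N₁ - δ₀) * (N₁ + δ₀) = d * (N₁ ^ 2 - δ₀ ^ 2) := by ring
      rw [this, hN₁sq] at e1
      calc -t * (N₁ + δ₀) ≤ d * (δ₀ ^ 2 - 2 * t * a + t ^ 2 * b - δ₀ ^ 2) := e1
        _ = d * (-2 * t * a + t ^ 2 * b) := by ring
    have f2 : t * (N₂ + δ₀) ≤ d * (2 * t * a + t ^ 2 * b) := by
      have : d * (N₂ - δ₀) * (N₂ + δ₀) = d * (N₂ ^ 2 - δ₀ ^ 2) := by ring
      rw [this, hN₂sq] at e2
      calc t * (N₂ + δ₀) = -(-t) * (N₂ + δ₀) := by ring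
        _ ≤ d * (δ₀ ^ 2 + 2 * t * a + t ^ 2 * b - δ₀ ^ 2) := e2
        _ = d * (2 * t * a + t ^ 2 * b) := by ring
    -- divide by t
    have g1 : 2 * d * a ≤ (N₁ + δ₀) + d * t * b := by
      refine le_of_mul_le_mul_left ?_ htpos
      have f1' : t * (2 * d * a) ≤ t * ((N₁ + δ₀) + d * t * b) := by linarith [f1]
      exact f1'
    have g2 : (N₂ + δ₀) - d * t * b ≤ 2 * d * a := by
      refine le_of_mul_le_mul_left ?_ htpos
      have f2' : t * ((N₂ + δ₀) - d * t * b) ≤ t * (2 * d * a) := by linarith [f2]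
      exact f2'
    have htb : (0:ℝ) ≤ t * b := mul_nonneg htpos.le hbnn
    have hdb : d * (t * b) ≤ |d| * (t * b) :=
      mul_le_mul_of_nonneg_right (le_abs_self d) htb
    have hdb' : -|d| * (t * b) ≤ d * (t * b) :=
      mul_le_mul_of_nonneg_right (neg_abs_le d) htb
    rw [abs_le, hC]
    constructor
    · linarith
    · linarith
  have hzero : 2 * d * a - 2 * δ₀ = 0 := by
    by_contra hne
    set x : ℝ := |2 * d * a - 2 * δ₀| with hx
    have hxpos : 0 < x := abs_pos.mpr hne
    set t : ℝ := min η' (x / (2 * (C + 1))) with htdef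
    have htpos : 0 < t := lt_min hη'pos (by positivity)
    have h1 := main t htpos (min_le_left _ _)
    have h2 : t ≤ x / (2 * (C + 1)) := min_le_right _ _
    have h3 : t * C ≤ (x / (2 * (C + 1))) * C :=
      mul_le_mul_of_nonneg_right h2 hCnn
    have h4 : (x / (2 * (C + 1))) * C < x := by
      rw [div_mul_eq_mul_div, div_lt_iff₀ (by positivity : (0:ℝ) < 2 * (C + 1))]
      have : 0 ≤ x * C := mul_nonneg hxpos.le hCnn
      linarith
    exact absurd ((h1.trans h3).trans_lt h4) (lt_irrefl x)
  have hda : d * a = δ₀ := by linarith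
  have hane : a ≠ 0 := by
    intro h0
    rw [h0, mul_zero] at hda
    linarith
  rw [eq_div_iff hane]
  exact hda
end

section
/- Consider a linear estimator L̂ = Σᵢ w₊(xᵢ)yᵢ − Σᵢ w₋(xᵢ)yᵢ in the regression model yᵢ = f(xᵢ) + uᵢ with E uᵢ = 0, where w₊(x) = 0 for x < 0, w₋(x) = 0 for x ≥ 0, Σᵢ w₊(xᵢ) = Σᵢ w₋(xᵢ) = 1, and Σᵢ xᵢʲ w₊(xᵢ) = Σᵢ xᵢʲ w₋(xᵢ) = 0 for j = 1,…,p−1. Then the maximum bias of L̂ for the RD parameter Lf = f₊(0) − f₋(0) over the class F_{RDT,p}(C) equals C·Σᵢ |w₊(xᵢ) + w₋(xᵢ)|·|xᵢ|^p. -/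
open Finset

lemma aux_abs_sign_le (r : ℝ) : |Real.sign r| ≤ 1 := by
  rcases lt_trichotomy r 0 with h|h|h
  · rw [Real.sign_of_neg h]; norm_num
  · rw [h, Real.sign_zero]; norm_num
  · rw [Real.sign_of_pos h]; norm_num

lemma aux_mul_sign (r : ℝ) : r * Real.sign r = |r| := by
  rcases lt_trichotomy r 0 with h|h|h
  · rw [Real.sign_of_neg h, abs_of_neg h]; ring
  · simp [h]
  · rw [Real.sign_of_pos h, abs_of_pos h]; ring

/-- Worst-case bias of a linear RD estimator over the Taylor class F_{RDT,p}(C). -/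
theorem rd_worst_case_bias (n p : ℕ) (hp : 1 ≤ p) (x : Fin n → ℝ)
    (C : ℝ) (hC : 0 ≤ C) (wp wm : ℝ → ℝ)
    (hwp0 : ∀ t : ℝ, t < 0 → wp t = 0)
    (hwm0 : ∀ t : ℝ, 0 ≤ t → wm t = 0)
    (hwp1 : ∑ i, wp (x i) = 1) (hwm1 : ∑ i, wm (x i) = 1)
    (hmomp : ∀ j, 1 ≤ j → j ≤ p - 1 → ∑ i, (x i) ^ j * wp (x i) = 0)
    (hmomm : ∀ j, 1 ≤ j → j ≤ p - 1 → ∑ i, (x i) ^ j * wm (x i) = 0) :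
    sSup {bias : ℝ | ∃ a b : ℕ → ℝ, ∃ rp rm : ℝ → ℝ,
        (∀ t : ℝ, |rp t| ≤ C * |t| ^ p) ∧ (∀ t : ℝ, |rm t| ≤ C * |t| ^ p) ∧
        bias = (∑ i, (wp (x i) - wm (x i)) *
            (if 0 ≤ x i then (∑ j ∈ Finset.range p, a j * (x i) ^ j) + rp (x i)
             else (∑ j ∈ Finset.range p, b j * (x i) ^ j) + rm (x i)))
          - (a 0 - b 0)} =
      C * ∑ i, |wp (x i) + wm (x i)| * |x i| ^ p := by
  set M := C * ∑ i, |wp (x i) + wm (x i)| * |x i| ^ p with hM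
  -- Key simplification of the bias expression
  have key : ∀ a b rp rm : ℕ → ℝ, True := fun _ _ _ _ => trivial
  have key2 : ∀ (a b : ℕ → ℝ) (rp rm : ℝ → ℝ),
      (∑ i, (wp (x i) - wm (x i)) *
          (if 0 ≤ x i then (∑ j ∈ Finset.range p, a j * (x i) ^ j) + rp (x i)
           else (∑ j ∈ Finset.range p, b j * (x i) ^ j) + rm (x i)))
        - (a 0 - b 0)
      = ∑ i, (wp (x i) * rp (x i) - wm (x i) * rm (x i)) := by
    intro a b rp rm
    have hterm : ∀ i : Fin n, (wp (x i) - wm (x i)) *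
          (if 0 ≤ x i then (∑ j ∈ Finset.range p, a j * (x i) ^ j) + rp (x i)
           else (∑ j ∈ Finset.range p, b j * (x i) ^ j) + rm (x i))
        = (wp (x i) * (∑ j ∈ Finset.range p, a j * (x i) ^ j)
            - wm (x i) * (∑ j ∈ Finset.range p, b j * (x i) ^ j))
          + (wp (x i) * rp (x i) - wm (x i) * rm (x i)) := by
      intro i
      by_cases h : 0 ≤ x i
      · rw [if_pos h, hwm0 _ h]; ring
      · rw [if_neg h, hwp0 _ (lt_of_not_ge h)]; ring
    rw [Finset.sum_congr rfl (fun i _ => hterm i), Finset.sum_add_distrib,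
      Finset.sum_sub_distrib]
    have hA : ∑ i, wp (x i) * (∑ j ∈ Finset.range p, a j * (x i) ^ j) = a 0 := by
      have h1 : ∀ i : Fin n, wp (x i) * (∑ j ∈ Finset.range p, a j * (x i) ^ j)
          = ∑ j ∈ Finset.range p, a j * ((x i) ^ j * wp (x i)) := by
        intro i; rw [Finset.mul_sum]; exact Finset.sum_congr rfl fun j _ => by ring
      rw [Finset.sum_congr rfl (fun i _ => h1 i), Finset.sum_comm]
      have h2 : ∀ j ∈ Finset.range p, (∑ i, a j * ((x i) ^ j * wp (x i)))
          = if j = 0 then a 0 else 0 := by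
        intro j hj
        rw [← Finset.mul_sum]
        rcases Nat.eq_zero_or_pos j with h0 | h0
        · subst h0
          simp [hwp1]
        · rw [hmomp j h0 (by have := Finset.mem_range.mp hj; omega), mul_zero,
            if_neg (by omega)]
      rw [Finset.sum_congr rfl h2, Finset.sum_ite_eq' (Finset.range p) 0 (fun _ => a 0),
        if_pos (Finset.mem_range.mpr hp)]
    have hB : ∑ i, wm (x i) * (∑ j ∈ Finset.range p, b j * (x i) ^ j) = b 0 := by
      have h1 : ∀ i : Fin n, wm (x i) * (∑ j ∈ Finset.range p, b j * (x i) ^ j)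
          = ∑ j ∈ Finset.range p, b j * ((x i) ^ j * wm (x i)) := by
        intro i; rw [Finset.mul_sum]; exact Finset.sum_congr rfl fun j _ => by ring
      rw [Finset.sum_congr rfl (fun i _ => h1 i), Finset.sum_comm]
      have h2 : ∀ j ∈ Finset.range p, (∑ i, b j * ((x i) ^ j * wm (x i)))
          = if j = 0 then b 0 else 0 := by
        intro j hj
        rw [← Finset.mul_sum]
        rcases Nat.eq_zero_or_pos j with h0 | h0
        · subst h0
          simp [hwm1]
        · rw [hmomm j h0 (by have := Finset.mem_range.mp hj; omega), mul_zero,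
            if_neg (by omega)]
      rw [Finset.sum_congr rfl h2, Finset.sum_ite_eq' (Finset.range p) 0 (fun _ => b 0),
        if_pos (Finset.mem_range.mpr hp)]
    rw [hA, hB]; ring
  -- disjoint supports
  have hsupp : ∀ i : Fin n, |wp (x i) + wm (x i)| = |wp (x i)| + |wm (x i)| := by
    intro i
    by_cases h : 0 ≤ x i
    · rw [hwm0 _ h]; simp
    · rw [hwp0 _ (lt_of_not_ge h)]; simp
  -- upper bound for each element
  have hub : ∀ (rp rm : ℝ → ℝ), (∀ t : ℝ, |rp t| ≤ C * |t| ^ p) →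
      (∀ t : ℝ, |rm t| ≤ C * |t| ^ p) →
      ∑ i, (wp (x i) * rp (x i) - wm (x i) * rm (x i)) ≤ M := by
    intro rp rm hrp hrm
    rw [hM, Finset.mul_sum]
    refine Finset.sum_le_sum fun i _ => ?_
    have h1 : wp (x i) * rp (x i) ≤ |wp (x i)| * (C * |x i| ^ p) := by
      calc wp (x i) * rp (x i) ≤ |wp (x i) * rp (x i)| := le_abs_self _
        _ = |wp (x i)| * |rp (x i)| := abs_mul _ _
        _ ≤ |wp (x i)| * (C * |x i| ^ p) :=
            mul_le_mul_of_nonneg_left (hrp _) (abs_nonneg _)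
    have h2 : -(wm (x i) * rm (x i)) ≤ |wm (x i)| * (C * |x i| ^ p) := by
      calc -(wm (x i) * rm (x i)) ≤ |wm (x i) * rm (x i)| := neg_le_abs _
        _ = |wm (x i)| * |rm (x i)| := abs_mul _ _
        _ ≤ |wm (x i)| * (C * |x i| ^ p) :=
            mul_le_mul_of_nonneg_left (hrm _) (abs_nonneg _)
    have := add_le_add h1 h2
    rw [hsupp i]
    nlinarith [this]
  apply le_antisymm
  · apply csSup_le
    · refine ⟨0, fun _ => 0, fun _ => 0, fun _ => 0, fun _ => 0,
        fun t => by simpa using mul_nonneg hC (pow_nonneg (abs_nonneg t) p),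
        fun t => by simpa using mul_nonneg hC (pow_nonneg (abs_nonneg t) p), ?_⟩
      have h := key2 (fun _ => 0) (fun _ => 0) (fun _ => 0) (fun _ => 0)
      beta_reduce at h ⊢
      rw [h]; simp
    · rintro y ⟨a, b, rp, rm, hrp, hrm, rfl⟩
      rw [key2]
      exact hub rp rm hrp hrm
  · apply le_csSup
    · exact ⟨M, by rintro y ⟨a, b, rp, rm, hrp, hrm, rfl⟩; rw [key2]; exact hub rp rm hrp hrm⟩
    · -- M is attained
      refine ⟨fun _ => 0, fun _ => 0,
        fun t => C * |t| ^ p * Real.sign (wp t),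
        fun t => -(C * |t| ^ p * Real.sign (wm t)), ?_, ?_, ?_⟩
      · intro t
        rw [abs_mul]
        calc |C * |t| ^ p| * |Real.sign (wp t)| ≤ |C * |t| ^ p| * 1 :=
              mul_le_mul_of_nonneg_left (aux_abs_sign_le _) (abs_nonneg _)
          _ = C * |t| ^ p := by
              rw [mul_one, abs_of_nonneg (mul_nonneg hC (pow_nonneg (abs_nonneg t) p))]
      · intro t
        rw [abs_neg, abs_mul]
        calc |C * |t| ^ p| * |Real.sign (wm t)| ≤ |C * |t| ^ p| * 1 :=
              mul_le_mul_of_nonneg_left (aux_abs_sign_le _) (abs_nonneg _)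
          _ = C * |t| ^ p := by
              rw [mul_one, abs_of_nonneg (mul_nonneg hC (pow_nonneg (abs_nonneg t) p))]
      · have h := key2 (fun _ => 0) (fun _ => 0)
          (fun t => C * |t| ^ p * Real.sign (wp t))
          (fun t => -(C * |t| ^ p * Real.sign (wm t)))
        beta_reduce at h ⊢
        rw [h, hM, Finset.mul_sum]
        refine (Finset.sum_congr rfl fun i _ => ?_).symm
        rw [hsupp i]
        have e1 : wp (x i) * (C * |x i| ^ p * Real.sign (wp (x i)))
            = C * |x i| ^ p * |wp (x i)| := by
          rw [show wp (x i) * (C * |x i| ^ p * Real.sign (wp (x i)))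
              = C * |x i| ^ p * (wp (x i) * Real.sign (wp (x i))) by ring, aux_mul_sign]
        have e2 : wm (x i) * (-(C * |x i| ^ p * Real.sign (wm (x i))))
            = -(C * |x i| ^ p * |wm (x i)|) := by
          rw [show wm (x i) * (-(C * |x i| ^ p * Real.sign (wm (x i))))
              = -(C * |x i| ^ p * (wm (x i) * Real.sign (wm (x i)))) by ring, aux_mul_sign]
        rw [e1, e2]; ring
end

section
/- Let Z ~ N(b, 1) with |b| ≤ B for some B ≥ 0, and let cv_α(B) denote the 1−α quantile of |N(B,1)|. Then P(|Z| ≤ cv_α(B)) ≥ 1 − α. -/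
open ProbabilityTheory MeasureTheory Real intervalIntegral

noncomputable def phi (x : ℝ) : ℝ := gaussianPDFReal 0 1 x

lemma phi_cont : Continuous phi := by
  unfold phi gaussianPDFReal
  fun_prop

lemma phi_intble (a b : ℝ) : IntervalIntegrable phi volume a b :=
  phi_cont.intervalIntegrable a b

lemma phi_even (x : ℝ) : phi (-x) = phi x := by
  unfold phi gaussianPDFReal
  norm_num

lemma phi_anti {x y : ℝ} (h : |y| ≤ |x|) : phi x ≤ phi y := by
  have hsq : y ^ 2 ≤ x ^ 2 := by nlinarith [sq_abs x, sq_abs y, abs_nonneg y]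
  unfold phi gaussianPDFReal
  apply mul_le_mul_of_nonneg_left _ (by positivity)
  apply Real.exp_le_exp.mpr
  push_cast
  nlinarith

lemma pdf_shift (t x : ℝ) : gaussianPDFReal t 1 x = phi (x - t) := by
  unfold phi
  rw [gaussianPDFReal_sub, zero_add]

lemma key (b B c : ℝ) (hb0 : 0 ≤ b) (hbB : b ≤ B) (hc : 0 ≤ c) :
    ∫ x in (-c)..c, phi (x - B) ≤ ∫ x in (-c)..c, phi (x - b) := by
  rw [integral_comp_sub_right phi B, integral_comp_sub_right phi b]
  have h1 : ∫ x in (-c - B)..(-c - b), phi x ≤ ∫ x in (c - B)..(c - b), phi x := by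
    have e1 : (∫ x in (-c - B)..(-c - b), phi x) = ∫ x in (c + b)..(c + B), phi x := by
      rw [show (-c - B : ℝ) = -(c + B) by ring, show (-c - b : ℝ) = -(c + b) by ring,
        ← integral_comp_neg phi]
      simp_rw [phi_even]
    have e2 : (∫ x in (c + b)..(c + B), phi x) = ∫ x in (c - B)..(c - b), phi (2*c - x) := by
      rw [integral_comp_sub_left phi (2*c)]
      congr 1 <;> ring
    rw [e1, e2]
    apply integral_mono_on (by linarith)
      ((phi_cont.comp (by fun_prop)).intervalIntegrable _ _) (phi_intble _ _)
    intro x hx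
    apply phi_anti
    have hxc : x ≤ c := le_trans hx.2 (by linarith)
    have h2cx : 0 ≤ 2*c - x := by linarith
    rw [abs_of_nonneg h2cx]
    rcases abs_cases x with ⟨h,_⟩|⟨h,_⟩ <;> linarith
  have h2 := integral_add_adjacent_intervals (phi_intble (-c-B) (-c-b)) (phi_intble (-c-b) (c-b))
  have h3 := integral_add_adjacent_intervals (phi_intble (-c-B) (c-B)) (phi_intble (c-B) (c-b))
  linarith

lemma key' (b B c : ℝ) (hbB : |b| ≤ B) (hc : 0 ≤ c) :
    ∫ x in (-c)..c, phi (x - B) ≤ ∫ x in (-c)..c, phi (x - b) := by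
  rcases le_or_gt 0 b with hb | hb
  · exact key b B c hb (by rwa [abs_of_nonneg hb] at hbB) hc
  · have h := key (-b) B c (by linarith) (by rwa [abs_of_neg hb] at hbB) hc
    have e : (∫ x in (-c)..c, phi (x - (-b))) = ∫ x in (-c)..c, phi (x - b) := by
      have : ∀ x : ℝ, phi (x - (-b)) = phi (-x - b) := by
        intro x; rw [← phi_even (-x - b)]; ring_nf
      simp_rw [this]
      rw [show (∫ x in (-c)..c, phi (-x - b)) = ∫ x in (-c)..c, (fun y => phi (y - b)) (-x) from rfl,
        integral_comp_neg (fun y => phi (y - b)), neg_neg]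
    linarith [e ▸ h]

/-- Coverage of the critical value cv_α(B): if |b| ≤ B then
P(|N(b,1)| ≤ cv_α(B)) ≥ 1 − α. -/
theorem cv_coverage (α B b c : ℝ) (hα0 : 0 < α) (hα1 : α < 1)
    (hB : 0 ≤ B) (hb : |b| ≤ B)
    (hc : gaussianReal B 1 {x : ℝ | |x| ≤ c} = ENNReal.ofReal (1 - α)) :
    ENNReal.ofReal (1 - α) ≤ gaussianReal b 1 {x : ℝ | |x| ≤ c} := by
  have hset : {x : ℝ | |x| ≤ c} = Set.Icc (-c) c := by ext x; simp [abs_le]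
  have hone : (1 : NNReal) ≠ 0 := one_ne_zero
  rcases lt_or_ge c 0 with hcneg | hc0
  · exfalso
    have : Set.Icc (-c) c = (∅ : Set ℝ) := Set.Icc_eq_empty (by linarith)
    rw [hset, this] at hc
    simp at hc
    linarith [hc]
  · have heq : ∀ t : ℝ, gaussianReal t 1 {x : ℝ | |x| ≤ c}
        = ENNReal.ofReal (∫ x in (-c)..c, phi (x - t)) := by
      intro t
      rw [hset, gaussianReal_apply_eq_integral t hone]
      congr 1
      rw [MeasureTheory.integral_Icc_eq_integral_Ioc,
        ← intervalIntegral.integral_of_le (by linarith : -c ≤ c)]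
      simp_rw [pdf_shift]
    rw [heq] at hc ⊢
    rw [← hc]
    exact ENNReal.ofReal_le_ofReal (key' b B c hb hc0)
end

section
/- In the Gaussian model Y ~ N(μ, σ²Iₙ) with μ constrained to convex set M₀ under H₀ and convex set M₁ under H₁, suppose μ₀* ∈ M₀ and μ₁* ∈ M₁ minimize the Euclidean distance ‖μ₁ − μ₀‖ over M₀ × M₁. Then the Neyman–Pearson test of μ₀* versus μ₁*, which rejects when (μ₁* − μ₀*)'Y exceeds its 1−α quantile under μ₀*, has size at most α over all of M₀; i.e., for every μ ∈ M₀, P_μ((μ₁*−μ₀*)'Y > (μ₁*−μ₀*)'μ₀* + σ‖μ₁*−μ₀*‖ z_{1−α}) ≤ α. -/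
open ProbabilityTheory MeasureTheory
set_option maxHeartbeats 1000000

/-- Size control of the minimax (Neyman–Pearson) test over the convex null set M₀:
under any μ ∈ M₀, the statistic ⟨μ₁*−μ₀*, Y⟩ ~ N(⟨μ₁*−μ₀*, μ⟩, σ²‖μ₁*−μ₀*‖²) exceeds
the critical value with probability at most α. -/
theorem minimax_test_size (n : ℕ) (M₀ M₁ : Set (EuclideanSpace ℝ (Fin n)))
    (hM₀ : Convex ℝ M₀) (hM₁ : Convex ℝ M₁)
    (μ₀ μ₁ : EuclideanSpace ℝ (Fin n)) (hμ₀ : μ₀ ∈ M₀) (hμ₁ : μ₁ ∈ M₁)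
    (hmin : ∀ a ∈ M₀, ∀ b ∈ M₁, ‖μ₁ - μ₀‖ ≤ ‖b - a‖)
    (hpos : 0 < ‖μ₁ - μ₀‖)
    (σ : ℝ) (hσ : 0 < σ) (α z : ℝ) (hα0 : 0 < α) (hα1 : α < 1)
    (hz : gaussianReal 0 1 {t : ℝ | t ≤ z} = ENNReal.ofReal (1 - α)) :
    ∀ μ ∈ M₀,
      gaussianReal (inner ℝ (μ₁ - μ₀) μ : ℝ)
          (Real.toNNReal (σ ^ 2 * ‖μ₁ - μ₀‖ ^ 2))
          {t : ℝ | (inner ℝ (μ₁ - μ₀) μ₀ : ℝ) + σ * ‖μ₁ - μ₀‖ * z < t}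
        ≤ ENNReal.ofReal α := by
  intro μ hμ
  set d : EuclideanSpace ℝ (Fin n) := μ₁ - μ₀ with hd
  -- Projection characterization: ⟪d, μ - μ₀⟫ ≤ 0
  have hinf : ‖μ₁ - μ₀‖ = ⨅ w : M₀, ‖μ₁ - w‖ := by
    haveI : Nonempty M₀ := ⟨⟨μ₀, hμ₀⟩⟩
    apply le_antisymm
    · exact le_ciInf fun w => hmin w w.2 μ₁ hμ₁
    · refine ciInf_le ?_ (⟨μ₀, hμ₀⟩ : M₀)
      refine ⟨0, ?_⟩
      rintro x ⟨w, rfl⟩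
      exact norm_nonneg _
  have hproj : (inner ℝ d (μ - μ₀) : ℝ) ≤ 0 :=
    (norm_eq_iInf_iff_real_inner_le_zero hM₀ hμ₀).mp hinf μ hμ
  have hmean : (inner ℝ d μ : ℝ) ≤ inner ℝ d μ₀ := by
    have := hproj
    rw [inner_sub_right] at this
    linarith
  set s : ℝ := σ * ‖d‖ with hs
  have hspos : 0 < s := mul_pos hσ hpos
  set m : ℝ := inner ℝ d μ with hm
  -- variance identification
  let V : NNReal := NNReal.mk (s ^ 2) (sq_nonneg s)
  have hvar : (Real.toNNReal (σ ^ 2 * ‖d‖ ^ 2)) = V * 1 := by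
    ext
    simp only [NNReal.coe_mul, NNReal.coe_one, mul_one, V, NNReal.coe_mk,
      Real.coe_toNNReal _ (by positivity : (0:ℝ) ≤ σ ^ 2 * ‖d‖ ^ 2)]
    rw [hs]; ring
  have hmap : gaussianReal m (Real.toNNReal (σ ^ 2 * ‖d‖ ^ 2))
      = (gaussianReal 0 1).map (fun x => s * x + m) := by
    have h1 : (gaussianReal 0 1).map (fun x => s * x) = gaussianReal 0 (V * 1) := by
      simpa [V] using gaussianReal_map_const_mul (μ := 0) (v := 1) s
    have h2 : ((gaussianReal 0 1).map (fun x => s * x)).map (fun x => x + m)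
        = gaussianReal m (V * 1) := by
      rw [h1]
      simpa using gaussianReal_map_add_const (μ := 0) (v := V * 1) m
    rw [hvar, ← h2, Measure.map_map (by fun_prop) (by fun_prop)]
    rfl
  rw [hmap, MeasureTheory.Measure.map_apply (by fun_prop) (by
    exact measurableSet_lt measurable_const measurable_id)]
  have hsub : (fun x => s * x + m) ⁻¹' {t : ℝ | (inner ℝ d μ₀ : ℝ) + s * z < t}
      ⊆ {x : ℝ | z < x} := by
    intro x hx
    simp only [Set.mem_preimage, Set.mem_setOf_eq] at hx ⊢
    have h3 : s * z < s * x := by linarith [hmean]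
    exact lt_of_mul_lt_mul_left h3 hspos.le
  refine le_trans (measure_mono hsub) ?_
  have hcompl : {x : ℝ | z < x} = {t : ℝ | t ≤ z}ᶜ := by
    ext x; simp [not_le]
  have hms : MeasurableSet {t : ℝ | t ≤ z} := measurableSet_Iic
  rw [hcompl, prob_compl_eq_one_sub hms, hz]
  rw [show (1 : ENNReal) = ENNReal.ofReal 1 by simp,
    ← ENNReal.ofReal_sub 1 (by linarith)]
  norm_num
end

section
/- In the same setup, the minimum power of the minimax test over M₁ is attained at μ₁*: for every μ ∈ M₁, P_μ((μ₁*−μ₀*)'Y > (μ₁*−μ₀*)'μ₀* + σ‖μ₁*−μ₀*‖ z_{1−α}) ≥ Φ(‖μ₁*−μ₀*‖/σ − z_{1−α}). -/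
set_option maxHeartbeats 1000000


open MeasureTheory ProbabilityTheory

/-- The minimum power of the minimax test over the convex alternative M₁ is
attained at μ₁*: for every μ ∈ M₁ the rejection probability is at least
Φ(‖μ₁*−μ₀*‖/σ − z_{1−α}). -/
theorem minimax_test_power (n : ℕ) (M₀ M₁ : Set (EuclideanSpace ℝ (Fin n)))
    (hM₀ : Convex ℝ M₀) (hM₁ : Convex ℝ M₁)
    (μ₀ μ₁ : EuclideanSpace ℝ (Fin n)) (hμ₀ : μ₀ ∈ M₀) (hμ₁ : μ₁ ∈ M₁)
    (hmin : ∀ a ∈ M₀, ∀ b ∈ M₁, ‖μ₁ - μ₀‖ ≤ ‖b - a‖)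
    (hpos : 0 < ‖μ₁ - μ₀‖)
    (σ : ℝ) (hσ : 0 < σ) (α z : ℝ) (hα0 : 0 < α) (hα1 : α < 1)
    (hz : gaussianReal 0 1 {t : ℝ | t ≤ z} = ENNReal.ofReal (1 - α)) :
    ∀ μ ∈ M₁,
      gaussianReal 0 1 {s : ℝ | s ≤ ‖μ₁ - μ₀‖ / σ - z}
        ≤ gaussianReal (inner ℝ (μ₁ - μ₀) μ : ℝ)
            (Real.toNNReal (σ ^ 2 * ‖μ₁ - μ₀‖ ^ 2))
            {t : ℝ | (inner ℝ (μ₁ - μ₀) μ₀ : ℝ) + σ * ‖μ₁ - μ₀‖ * z < t} := by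
  intro μ hμ
  set v : EuclideanSpace ℝ (Fin n) := μ₁ - μ₀ with hv
  -- Projection characterization: μ₁ is the projection of μ₀ onto M₁
  have hproj : (inner ℝ (μ₀ - μ₁) (μ - μ₁) : ℝ) ≤ 0 := by
    have hne : Nonempty M₁ := ⟨⟨μ₁, hμ₁⟩⟩
    have hinf : ‖μ₀ - μ₁‖ = ⨅ w : M₁, ‖μ₀ - w‖ := by
      apply le_antisymm
      · apply le_ciInf
        intro w
        calc ‖μ₀ - μ₁‖ = ‖μ₁ - μ₀‖ := norm_sub_rev _ _
          _ ≤ ‖(w : EuclideanSpace ℝ (Fin n)) - μ₀‖ := hmin μ₀ hμ₀ w w.2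
          _ = ‖μ₀ - (w : EuclideanSpace ℝ (Fin n))‖ := norm_sub_rev _ _
      · refine ciInf_le (f := fun w : M₁ => ‖μ₀ - (w : EuclideanSpace ℝ (Fin n))‖) ?_ ⟨μ₁, hμ₁⟩
        refine ⟨0, ?_⟩
        rintro x ⟨w, rfl⟩
        exact norm_nonneg _
    exact (norm_eq_iInf_iff_real_inner_le_zero hM₁ hμ₁).mp hinf μ hμ
  -- Key inequality: ⟪v, μ⟫ ≥ ⟪v, μ₀⟫ + ‖v‖²
  set m : ℝ := (inner ℝ v μ : ℝ) with hm
  have hkey : (inner ℝ v μ₀ : ℝ) + ‖v‖ ^ 2 ≤ m := by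
    have h1 : (0:ℝ) ≤ inner ℝ v (μ - μ₁) := by
      have he : (inner ℝ (μ₀ - μ₁) (μ - μ₁) : ℝ) = - inner ℝ v (μ - μ₁) := by
        rw [hv, ← inner_neg_left, neg_sub]
      rw [he] at hproj; linarith
    have h2 : m = (inner ℝ v μ₁ : ℝ) + inner ℝ v (μ - μ₁) := by
      rw [hm, ← inner_add_right]; congr 1; abel
    have h3 : (inner ℝ v μ₁ : ℝ) = inner ℝ v μ₀ + ‖v‖ ^ 2 := by
      have hs : (inner ℝ v v : ℝ) = ‖v‖ ^ 2 := real_inner_self_eq_norm_sq v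
      rw [hv] at hs ⊢
      rw [show (inner ℝ (μ₁ - μ₀) μ₁ : ℝ)
          = inner ℝ (μ₁ - μ₀) μ₀ + inner ℝ (μ₁ - μ₀) (μ₁ - μ₀) by
        rw [← inner_add_right]; congr 1; abel]
      rw [hs]
    linarith
  -- constants
  set c : ℝ := σ * ‖v‖ with hc
  have hc0 : 0 < c := mul_pos hσ hpos
  set a : ℝ := (inner ℝ v μ₀ : ℝ) + c * z with ha
  -- the target Gaussian as a pushforward of the standard Gaussian
  have hmul : (gaussianReal 0 1).map (fun x : ℝ => c * x)
      = gaussianReal 0 (Real.toNNReal (σ ^ 2 * ‖v‖ ^ 2)) := by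
    have h := gaussianReal_map_const_mul (μ := 0) (v := 1) c
    simp only [mul_zero] at h
    rw [h]
    congr 1
    refine NNReal.coe_injective ?_
    rw [NNReal.coe_mul, NNReal.coe_one, mul_one, NNReal.coe_mk,
      Real.coe_toNNReal _ (by positivity), hc]
    ring
  have hmapped : (gaussianReal 0 1).map (fun x : ℝ => c * x + m)
      = gaussianReal m (Real.toNNReal (σ ^ 2 * ‖v‖ ^ 2)) := by
    have hco : (fun x : ℝ => c * x + m) = (fun x : ℝ => x + m) ∘ (fun x : ℝ => c * x) := rfl
    rw [hco, ← Measure.map_map (measurable_add_const m) (measurable_const_mul c),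
      hmul, gaussianReal_map_add_const, zero_add]
  -- rewrite the RHS
  have hRHS : gaussianReal m (Real.toNNReal (σ ^ 2 * ‖v‖ ^ 2)) {t : ℝ | a < t}
      = gaussianReal 0 1 {x : ℝ | (a - m) / c < x} := by
    rw [← hmapped, show {t : ℝ | a < t} = Set.Ioi a from rfl,
      show {x : ℝ | (a - m) / c < x} = Set.Ioi ((a - m) / c) from rfl,
      Measure.map_apply ((measurable_const_mul c).add_const m) measurableSet_Ioi]
    congr 1
    ext x
    simp only [Set.mem_preimage, Set.mem_Ioi, Set.mem_Iic, Set.mem_Ici]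
    rw [div_lt_iff₀ hc0]
    constructor <;> intro h <;> nlinarith
  -- symmetry of the standard Gaussian
  have hneg : (gaussianReal 0 1).map (fun x : ℝ => -x) = gaussianReal 0 1 := by
    have : (fun x : ℝ => -x) = (fun x : ℝ => (-1 : ℝ) * x) := by funext x; ring
    rw [this, gaussianReal_map_const_mul]
    norm_num
  have hLHS : gaussianReal 0 1 {s : ℝ | s ≤ ‖v‖ / σ - z}
      = gaussianReal 0 1 {x : ℝ | z - ‖v‖ / σ ≤ x} := by
    conv_lhs => rw [← hneg]
    rw [show {s : ℝ | s ≤ ‖v‖ / σ - z} = Set.Iic (‖v‖ / σ - z) from rfl,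
      show {x : ℝ | z - ‖v‖ / σ ≤ x} = Set.Ici (z - ‖v‖ / σ) from rfl,
      Measure.map_apply measurable_neg measurableSet_Iic]
    congr 1
    ext x
    simp only [Set.mem_preimage, Set.mem_Ioi, Set.mem_Iic, Set.mem_Ici]
    constructor <;> intro h <;> linarith
  -- the threshold comparison
  have hd : (a - m) / c ≤ z - ‖v‖ / σ := by
    rw [div_le_iff₀ hc0]
    have h2 : (z - ‖v‖ / σ) * c = c * z - ‖v‖ ^ 2 := by
      field_simp [hc]; ring
    rw [h2, ha]
    linarith
  -- put things together
  rw [hLHS, hRHS]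
  have hsub : {x : ℝ | z - ‖v‖ / σ ≤ x} ⊆ {(a - m) / c} ∪ {x : ℝ | (a - m) / c < x} := by
    intro x hx
    rcases eq_or_lt_of_le (le_trans hd hx) with h | h
    · exact Or.inl h.symm
    · exact Or.inr h
  calc gaussianReal 0 1 {x : ℝ | z - ‖v‖ / σ ≤ x}
      ≤ gaussianReal 0 1 ({(a - m) / c} ∪ {x : ℝ | (a - m) / c < x}) :=
        measure_mono hsub
    _ ≤ gaussianReal 0 1 {(a - m) / c} + gaussianReal 0 1 {x : ℝ | (a - m) / c < x} :=
        measure_union_le _ _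
    _ = gaussianReal 0 1 {x : ℝ | (a - m) / c < x} := by
        rw [gaussianReal_absolutelyContinuous 0 one_ne_zero (by simp), zero_add]
end

section
/- For the affine estimator L̂ with worst-case bias over F bounded by B̄ = max{|sup_f bias_f|, |inf_f bias_f|} < ∞, the fixed-length interval L̂ ± cv_α(B̄/(σ‖w‖))·σ‖w‖ has coverage at least 1−α for Lf uniformly over f ∈ F. -/
open ProbabilityTheory MeasureTheory Real intervalIntegral

private lemma pdf_anti {y z : ℝ} (h : y ^ 2 ≤ z ^ 2) :
    gaussianPDFReal 0 1 z ≤ gaussianPDFReal 0 1 y := by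
  simp only [gaussianPDFReal, sub_zero, NNReal.coe_one, mul_one]
  gcongr

private lemma interval_int (t c : ℝ) :
    gaussianReal t 1 {x : ℝ | |x| ≤ c} =
      ENNReal.ofReal (∫ x in (-c - t)..(c - t), gaussianPDFReal 0 1 x) := by
  have hset : {x : ℝ | |x| ≤ c} = Set.Icc (-c) c := by
    ext x; simp [abs_le]
  by_cases hc : -c ≤ c
  · rw [hset, gaussianReal_apply_eq_integral _ one_ne_zero]
    have h1 : gaussianReal t 1 (Set.Icc (-c) c) = gaussianReal t 1 (Set.Icc (-c) c) := rfl
    have hIcc : ∫ x in Set.Icc (-c) c, gaussianPDFReal t 1 x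
        = ∫ x in Set.Ioc (-c) c, gaussianPDFReal t 1 x :=
      integral_Icc_eq_integral_Ioc
    rw [hIcc, ← intervalIntegral.integral_of_le hc]
    have : ∀ x : ℝ, gaussianPDFReal t 1 x = gaussianPDFReal 0 1 (x - t) := by
      intro x; rw [gaussianPDFReal_sub, zero_add]
    simp_rw [this]
    rw [intervalIntegral.integral_comp_sub_right]
  · push_neg at hc
    have hempty : {x : ℝ | |x| ≤ c} = (∅ : Set ℝ) := by
      rw [hset]; exact Set.Icc_eq_empty (by linarith)
    rw [hempty, measure_empty, intervalIntegral.integral_of_ge (by linarith)]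
    rw [← intervalIntegral.integral_of_le (by linarith)]
    have hle : ∫ x in (c - t)..(-c - t), gaussianPDFReal 0 1 x ≥ 0 :=
      intervalIntegral.integral_nonneg (by linarith) (fun x _ => gaussianPDFReal_nonneg _ _ _)
    simp [ENNReal.ofReal_eq_zero]
    linarith

private lemma key_s17 {c t₁ t₂ : ℝ} (hc : 0 ≤ c) (h1 : 0 ≤ t₁) (h12 : t₁ ≤ t₂) :
    gaussianReal t₂ 1 {x : ℝ | |x| ≤ c} ≤ gaussianReal t₁ 1 {x : ℝ | |x| ≤ c} := by
  rw [interval_int, interval_int]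
  apply ENNReal.ofReal_le_ofReal
  set φ := gaussianPDFReal 0 1 with hφ
  have hint : ∀ a b : ℝ, IntervalIntegrable φ volume a b :=
    fun a b => (integrable_gaussianPDFReal 0 1).intervalIntegrable
  -- a_i = -c - t_i, b_i = c - t_i
  have hdecomp : (∫ x in (-c - t₂)..(c - t₂), φ x) + (∫ x in (c - t₂)..(c - t₁), φ x)
      = (∫ x in (-c - t₂)..(-c - t₁), φ x) + (∫ x in (-c - t₁)..(c - t₁), φ x) := by
    rw [intervalIntegral.integral_add_adjacent_intervals (hint _ _) (hint _ _),
      intervalIntegral.integral_add_adjacent_intervals (hint _ _) (hint _ _)]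
  have hshift : (∫ x in (-c - t₂)..(-c - t₁), φ x)
      = ∫ x in (c - t₂)..(c - t₁), φ (x - 2 * c) := by
    rw [intervalIntegral.integral_comp_sub_right]
    ring_nf
  have hmono : (∫ x in (c - t₂)..(c - t₁), φ (x - 2 * c))
      ≤ ∫ x in (c - t₂)..(c - t₁), φ x := by
    apply intervalIntegral.integral_mono_on (by linarith)
    · exact ((integrable_gaussianPDFReal 0 1).comp_sub_right (2*c)).intervalIntegrable
    · exact hint _ _
    · intro x hx
      apply pdf_anti
      have hx2 : x ≤ c - t₁ := hx.2
      nlinarith [hx.1]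
  linarith [hdecomp, hshift ▸ hmono]

private lemma symm_abs (t c : ℝ) :
    gaussianReal t 1 {x : ℝ | |x| ≤ c} = gaussianReal (-t) 1 {x : ℝ | |x| ≤ c} := by
  rw [interval_int, interval_int]
  congr 1
  have : ∀ x : ℝ, gaussianPDFReal 0 1 x = gaussianPDFReal 0 1 (-x) := by
    intro x
    simp [gaussianPDFReal]
  rw [show (∫ x in (-c - -t)..(c - -t), gaussianPDFReal 0 1 x)
      = ∫ x in (-c - -t)..(c - -t), gaussianPDFReal 0 1 (-x) by
    exact intervalIntegral.integral_congr (fun x _ => this x)]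
  rw [intervalIntegral.integral_comp_neg (fun x => gaussianPDFReal 0 1 x)]
  congr 1 <;> ring

private lemma key'_s17 {c t T : ℝ} (hc : 0 ≤ c) (hT : 0 ≤ T) (h : |t| ≤ T) :
    gaussianReal T 1 {x : ℝ | |x| ≤ c} ≤ gaussianReal t 1 {x : ℝ | |x| ≤ c} := by
  rcases le_or_gt 0 t with ht | ht
  · exact key_s17 hc ht (by rwa [abs_of_nonneg ht] at h)
  · rw [symm_abs t c]
    exact key_s17 hc (by linarith) (by rwa [abs_of_neg ht] at h)

/-- The fixed-length CI L̂ ± cv_α(B̄/(σ‖w‖))·σ‖w‖ has coverage at least 1−α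
uniformly over F, where |L̂ − Lf| ~ |N(bias_f, σ²‖w‖²)| and |bias_f| ≤ B̄. -/
theorem fixed_length_ci_coverage {V Y : Type*} [AddCommGroup V] [Module ℝ V]
    [NormedAddCommGroup Y] [InnerProductSpace ℝ Y]
    (K : V →ₗ[ℝ] Y) (L : V →ₗ[ℝ] ℝ) (F : Set V) (hF : Convex ℝ F)
    (w : Y) (a σ : ℝ) (hσ : 0 < σ) (hw : 0 < ‖w‖)
    (bias : V → ℝ) (hbias : ∀ f, bias f = a + (inner ℝ w (K f) : ℝ) - L f)
    (Bbar : ℝ) (hB : ∀ f ∈ F, |bias f| ≤ Bbar)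
    (α cv : ℝ) (hα0 : 0 < α) (hα1 : α < 1)
    (hcv : gaussianReal (Bbar / (σ * ‖w‖)) 1 {x : ℝ | |x| ≤ cv} =
      ENNReal.ofReal (1 - α)) :
    ∀ f ∈ F, ENNReal.ofReal (1 - α) ≤
      gaussianReal (bias f) (Real.toNNReal (σ ^ 2 * ‖w‖ ^ 2))
        {t : ℝ | |t| ≤ cv * (σ * ‖w‖)} := by
  intro f hf
  set s := σ * ‖w‖ with hs
  have hs0 : 0 < s := mul_pos hσ hw
  have hvar : (Real.toNNReal (σ ^ 2 * ‖w‖ ^ 2)) = (⟨s ^ 2, sq_nonneg s⟩ * 1 : NNReal) := by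
    apply NNReal.coe_injective
    have : (0:ℝ) ≤ σ ^ 2 * ‖w‖ ^ 2 := by positivity
    simp [Real.coe_toNNReal _ this, hs]
    show σ ^ 2 * ‖w‖ ^ 2 = (σ * ‖w‖) ^ 2 * 1
    ring
  have hmap : gaussianReal (bias f) (Real.toNNReal (σ ^ 2 * ‖w‖ ^ 2))
      = (gaussianReal (bias f / s) 1).map (s * ·) := by
    rw [gaussianReal_map_const_mul, mul_div_cancel₀ _ hs0.ne', hvar]
    rfl
  have hmeas : MeasurableSet {t : ℝ | |t| ≤ cv * s} :=
    (isClosed_le continuous_abs continuous_const).measurableSet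
  rw [hmap, Measure.map_apply (measurable_const_mul s) hmeas]
  have hpre : (s * ·) ⁻¹' {t : ℝ | |t| ≤ cv * s} = {x : ℝ | |x| ≤ cv} := by
    ext x
    simp only [Set.mem_preimage, Set.mem_setOf_eq, abs_mul, abs_of_pos hs0]
    rw [mul_comm s |x|]
    exact mul_le_mul_iff_of_pos_right hs0
  rw [hpre, ← hcv]
  have hcv0 : 0 ≤ cv := by
    by_contra h
    push_neg at h
    have hempty : {x : ℝ | |x| ≤ cv} = (∅ : Set ℝ) := by
      ext x; simp only [Set.mem_setOf_eq, Set.mem_empty_iff_false, iff_false, not_le]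
      linarith [abs_nonneg x]
    rw [hempty, measure_empty] at hcv
    have hpos := ENNReal.ofReal_pos.mpr (by linarith : (0:ℝ) < 1 - α)
    rw [← hcv] at hpos
    exact lt_irrefl _ hpos
  have hBpos : 0 ≤ Bbar := le_trans (abs_nonneg _) (hB f hf)
  apply key'_s17 hcv0 (div_nonneg hBpos hs0.le)
  rw [abs_div, abs_of_pos hs0]
  gcongr
  exact hB f hf
end

section
/- In the RD model with Lipschitz class F_{RDT,1}(C) and homoskedastic errors, the functions g*(x) = 1{x≥0}(L₀+b) + C h₊ k₊(x/h₊) − C h₋ k₋(x/h₋) and f*(x) = 2·1{x≥0}(L₀+b) − g*(x), where k(u) = max{0, 1−|u|}, k₊(u) = k(u)1{u≥0}, k₋(u) = k(u)1{u<0}, and h₊ + h₋ = b/C, satisfy: f*, g* ∈ F_{RDT,1}(C) (up to the intercept shift), L f* = L₀, and L g* = L₀ + 2b, where Lf = f₊(0) − f₋(0). -/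
lemma rd_aux (t : ℝ) (ht : 0 ≤ t) : |max 0 (1 - t) - 1| ≤ t := by
  rcases le_total (1 - t) 0 with h | h
  · rw [max_eq_left h, abs_of_nonpos (by norm_num)]; linarith
  · rw [max_eq_right h, abs_of_nonpos (by linarith)]; linarith

lemma rd_tendsto {f : ℝ → ℝ} {L C : ℝ}
    (h : ∀ x : ℝ, x < 0 → |f x - L| ≤ C * |x|) :
    Filter.Tendsto f (nhdsWithin 0 (Set.Iio 0)) (nhds L) := by
  have h1 : Filter.Tendsto (fun x : ℝ => f x - L) (nhdsWithin 0 (Set.Iio 0)) (nhds 0) := by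
    refine squeeze_zero_norm' (a := fun x : ℝ => C * |x|) ?_ ?_
    · filter_upwards [self_mem_nhdsWithin] with x hx
      exact h x hx
    · have : Filter.Tendsto (fun x : ℝ => C * |x|) (nhds 0) (nhds (C * |(0:ℝ)|)) := by
        exact (continuous_const.mul (continuous_abs)).tendsto 0
      simpa using this.mono_left nhdsWithin_le_nhds
  have := h1.add (tendsto_const_nhds (x := L))
  simpa using this

/-- The least favorable functions f*, g* for the RD problem with Lipschitz class
F_{RDT,1}(C): they belong to the class (each piece Lipschitz-controlled around 0
with constant C) and satisfy Lg* = L₀ + 2b, Lf* = L₀. -/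
theorem rd_least_favorable (C b L₀ hPlus hMinus : ℝ)
    (hC : 0 < C) (hb : 0 < b) (hhp : 0 < hPlus) (hhm : 0 < hMinus)
    (hsum : hPlus + hMinus = b / C)
    (k kp km : ℝ → ℝ)
    (hk : ∀ u, k u = max 0 (1 - |u|))
    (hkp : ∀ u, kp u = if 0 ≤ u then k u else 0)
    (hkm : ∀ u, km u = if u < 0 then k u else 0)
    (gp gm fp fm : ℝ → ℝ)
    (hgp : ∀ x, gp x = if 0 ≤ x then (L₀ + b) + C * hPlus * kp (x / hPlus) else 0)
    (hgm : ∀ x, gm x = if x < 0 then -(C * hMinus * km (x / hMinus)) else 0)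
    (hfp : ∀ x, fp x =
      if 0 ≤ x then 2 * (L₀ + b) - ((L₀ + b) + C * hPlus * kp (x / hPlus)) else 0)
    (hfm : ∀ x, fm x = if x < 0 then C * hMinus * km (x / hMinus) else 0) :
    (∀ x : ℝ, 0 ≤ x → |gp x - gp 0| ≤ C * |x|) ∧
    (∀ x : ℝ, x < 0 → |gm x - (-(C * hMinus))| ≤ C * |x|) ∧
    (∀ x : ℝ, 0 ≤ x → |fp x - fp 0| ≤ C * |x|) ∧
    (∀ x : ℝ, x < 0 → |fm x - (C * hMinus)| ≤ C * |x|) ∧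
    Filter.Tendsto gm (nhdsWithin 0 (Set.Iio 0)) (nhds (-(C * hMinus))) ∧
    Filter.Tendsto fm (nhdsWithin 0 (Set.Iio 0)) (nhds (C * hMinus)) ∧
    gp 0 - (-(C * hMinus)) = L₀ + 2 * b ∧
    fp 0 - (C * hMinus) = L₀ := by
  -- kp at nonneg arguments
  have hkp' : ∀ x : ℝ, 0 ≤ x → kp (x / hPlus) = max 0 (1 - x / hPlus) := by
    intro x hx
    have h1 : 0 ≤ x / hPlus := div_nonneg hx hhp.le
    rw [hkp, if_pos h1, hk, abs_of_nonneg h1]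
  have hkm' : ∀ x : ℝ, x < 0 → km (x / hMinus) = max 0 (1 - |x| / hMinus) := by
    intro x hx
    have h1 : x / hMinus < 0 := div_neg_of_neg_of_pos hx hhm
    rw [hkm, if_pos h1, hk, abs_div, abs_of_pos hhm]
  have hgp0 : gp 0 = (L₀ + b) + C * hPlus := by
    rw [hgp, if_pos le_rfl, hkp' 0 le_rfl]
    norm_num
  have hfp0 : fp 0 = (L₀ + b) - C * hPlus := by
    rw [hfp, if_pos le_rfl, hkp' 0 le_rfl]
    norm_num; ring
  have hCb : C * (hPlus + hMinus) = b := by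
    rw [hsum]; field_simp
  -- main bound on the plus side
  have hgpB : ∀ x : ℝ, 0 ≤ x → |gp x - gp 0| ≤ C * |x| := by
    intro x hx
    rw [hgp x, if_pos hx, hkp' x hx, hgp0]
    have : (L₀ + b) + C * hPlus * max 0 (1 - x / hPlus) - ((L₀ + b) + C * hPlus)
        = (C * hPlus) * (max 0 (1 - x / hPlus) - 1) := by ring
    rw [this, abs_mul, abs_of_nonneg (by positivity)]
    have h2 := rd_aux (x / hPlus) (div_nonneg hx hhp.le)
    calc C * hPlus * |max 0 (1 - x / hPlus) - 1| ≤ C * hPlus * (x / hPlus) := by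
          apply mul_le_mul_of_nonneg_left h2 (by positivity)
      _ = C * x := by field_simp
      _ ≤ C * |x| := by
          apply mul_le_mul_of_nonneg_left (le_abs_self x) hC.le
  have hgmB : ∀ x : ℝ, x < 0 → |gm x - (-(C * hMinus))| ≤ C * |x| := by
    intro x hx
    rw [hgm x, if_pos hx, hkm' x hx]
    have : -(C * hMinus * max 0 (1 - |x| / hMinus)) - (-(C * hMinus))
        = -((C * hMinus) * (max 0 (1 - |x| / hMinus) - 1)) := by ring
    rw [this, abs_neg, abs_mul, abs_of_nonneg (by positivity)]
    have h2 := rd_aux (|x| / hMinus) (by positivity)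
    calc C * hMinus * |max 0 (1 - |x| / hMinus) - 1| ≤ C * hMinus * (|x| / hMinus) := by
          apply mul_le_mul_of_nonneg_left h2 (by positivity)
      _ = C * |x| := by field_simp
  have hfpB : ∀ x : ℝ, 0 ≤ x → |fp x - fp 0| ≤ C * |x| := by
    intro x hx
    have : fp x - fp 0 = -(gp x - gp 0) := by
      rw [hfp x, if_pos hx, hgp x, if_pos hx, hfp0, hgp0]; ring
    rw [this, abs_neg]
    exact hgpB x hx
  have hfmB : ∀ x : ℝ, x < 0 → |fm x - (C * hMinus)| ≤ C * |x| := by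
    intro x hx
    have : fm x - C * hMinus = -(gm x - (-(C * hMinus))) := by
      rw [hfm x, if_pos hx, hgm x, if_pos hx]; ring
    rw [this, abs_neg]
    exact hgmB x hx
  refine ⟨hgpB, hgmB, hfpB, hfmB, rd_tendsto hgmB, rd_tendsto hfmB, ?_, ?_⟩
  · rw [hgp0]; linarith [hCb]
  · rw [hfp0]; linarith [hCb]
end
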